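/- arXiv:1403.7724 — 2 statements merged into one kernel-verified Lean document; each statement's English description precedes it below -/
import Mathlib

section
/- An ideal I ⊆ ℂ[z_1,…,z_s] is zero-dimensional, i.e. I is a proper ideal and the quotient ℂ[z_1,…,z_s]/I is a finite-dimensional ℂ-vector space, if and only if there exist a finite nonempty set Z ⊂ ℂ^s and nonzero finite-dimensional D-invariant subspaces Q_ζ ⊆ ℂ[z_1,…,z_s], ζ ∈ Z, such that for every polynomial f: f ∈ I if and only if (q(D)f)(ζ) = 0 for all q ∈ Q_ζ and all ζ ∈ Z. -/
open MvPolynomial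

/-- The formal differential operator `∂^{|β|}/∂z^β` applied to a multivariate polynomial. -/
noncomputable def DOp {s : ℕ} (β : Fin s →₀ ℕ) (f : MvPolynomial (Fin s) ℂ) :
    MvPolynomial (Fin s) ℂ :=
  ∑ δ ∈ f.support,
    MvPolynomial.monomial (δ - β) (f.coeff δ * ∏ j, (Nat.descFactorial (δ j) (β j) : ℂ))

/-- `q(D) f`: the constant coefficient differential operator associated with `q`, applied
to `f`. -/
noncomputable def polyD {s : ℕ} (q f : MvPolynomial (Fin s) ℂ) : MvPolynomial (Fin s) ℂ :=
  ∑ β ∈ q.support, q.coeff β • DOp β f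

/-- A subspace `Q` is `D`-invariant if `q(D) p ∈ Q` for every `p ∈ Q` and every polynomial
`q`. -/
def DInvariant {s : ℕ} (Q : Submodule ℂ (MvPolynomial (Fin s) ℂ)) : Prop :=
  ∀ q : MvPolynomial (Fin s) ℂ, ∀ p ∈ Q, polyD q p ∈ Q

namespace Stmt5Aux

variable {s : ℕ}

lemma DOp_def (β : Fin s →₀ ℕ) (f : MvPolynomial (Fin s) ℂ) :
    DOp β f = (AddMonoidAlgebra.coeff f).sum fun δ c =>
      monomial (δ - β) (c * ∏ j, (Nat.descFactorial (δ j) (β j) : ℂ)) := by rw [MvPolynomial.sum_def]; rfl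

lemma DOp_add (β : Fin s →₀ ℕ) (f g : MvPolynomial (Fin s) ℂ) :
    DOp β (f + g) = DOp β f + DOp β g := by
  simp only [DOp_def, AddMonoidAlgebra.coeff_add]
  apply Finsupp.sum_add_index' <;> intros <;> simp [add_mul]

lemma DOp_smul (β : Fin s →₀ ℕ) (c : ℂ) (f : MvPolynomial (Fin s) ℂ) :
    DOp β (c • f) = c • DOp β f := by
  simp only [DOp_def, AddMonoidAlgebra.coeff_smul]
  rw [Finsupp.sum_smul_index, Finsupp.smul_sum]
  · apply Finsupp.sum_congr
    intros; simp [mul_assoc, MvPolynomial.smul_monomial]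
  · intros; simp

lemma DOp_monomial (β α : Fin s →₀ ℕ) (c : ℂ) :
    DOp β (monomial α c) =
      monomial (α - β) (c * ∏ j, (Nat.descFactorial (α j) (β j) : ℂ)) := by
  rcases eq_or_ne c 0 with rfl | hc
  · simp [DOp]
  · rw [DOp, MvPolynomial.support_monomial, if_neg hc, Finset.sum_singleton,
      MvPolynomial.coeff_monomial, if_pos rfl]


lemma coeff_zero_DOp (β : Fin s →₀ ℕ) (f : MvPolynomial (Fin s) ℂ) :
    MvPolynomial.coeff 0 (DOp β f) = MvPolynomial.coeff β f * ∏ j, ((β j).factorial : ℂ) := by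
  rw [DOp, MvPolynomial.coeff_sum]
  have h : ∀ δ ∈ f.support,
      MvPolynomial.coeff 0 (monomial (δ - β)
        (MvPolynomial.coeff δ f * ∏ j, (Nat.descFactorial (δ j) (β j) : ℂ)))
      = if δ = β then MvPolynomial.coeff δ f * ∏ j, ((β j).factorial : ℂ) else 0 := by
    intro δ _
    rcases eq_or_ne δ β with rfl | hδ
    · rw [if_pos rfl, tsub_self, MvPolynomial.coeff_monomial, if_pos rfl]
      simp [Nat.descFactorial_self]
    · rw [if_neg hδ, MvPolynomial.coeff_monomial]
      rcases eq_or_ne (δ - β) 0 with h0 | h0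
      · rw [if_pos h0]
        have hle : δ ≤ β := tsub_eq_zero_iff_le.mp h0
        obtain ⟨j, hj⟩ : ∃ j, δ j ≠ β j := by
          by_contra hall
          push_neg at hall
          exact hδ (Finsupp.ext hall)
        have : Nat.descFactorial (δ j) (β j) = 0 :=
          Nat.descFactorial_eq_zero_iff_lt.mpr (lt_of_le_of_ne (Finsupp.le_def.mp hle j) hj)
        rw [Finset.prod_eq_zero (Finset.mem_univ j) (by exact_mod_cast Nat.cast_eq_zero.mpr this),
          mul_zero]
      · rw [if_neg h0]
  rw [Finset.sum_congr rfl h, Finset.sum_ite_eq' f.support β]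
  split_ifs with hβ
  · rfl
  · rw [MvPolynomial.notMem_support_iff.mp hβ, zero_mul]

lemma DOp_zero (f : MvPolynomial (Fin s) ℂ) : DOp 0 f = f := by
  conv_rhs => rw [← MvPolynomial.support_sum_monomial_coeff f]
  rw [DOp]
  refine Finset.sum_congr rfl fun δ _ => ?_
  simp

lemma polyD_add_right (q f g : MvPolynomial (Fin s) ℂ) :
    polyD q (f + g) = polyD q f + polyD q g := by
  rw [polyD, polyD, polyD, ← Finset.sum_add_distrib]
  exact Finset.sum_congr rfl fun β _ => by rw [DOp_add, smul_add]

lemma polyD_smul_right (q : MvPolynomial (Fin s) ℂ) (c : ℂ) (f : MvPolynomial (Fin s) ℂ) :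
    polyD q (c • f) = c • polyD q f := by
  rw [polyD, polyD, Finset.smul_sum]
  exact Finset.sum_congr rfl fun β _ => by rw [DOp_smul, smul_comm]

lemma polyD_def' (q f : MvPolynomial (Fin s) ℂ) :
    polyD q f = (AddMonoidAlgebra.coeff q).sum fun β c => c • DOp β f := by rw [MvPolynomial.sum_def]; rfl

lemma polyD_add_left (q r f : MvPolynomial (Fin s) ℂ) :
    polyD (q + r) f = polyD q f + polyD r f := by
  simp only [polyD_def', AddMonoidAlgebra.coeff_add]
  exact Finsupp.sum_add_index' (by intros; simp) (by intros; rw [add_smul])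

lemma polyD_smul_left (c : ℂ) (q f : MvPolynomial (Fin s) ℂ) :
    polyD (c • q) f = c • polyD q f := by
  simp only [polyD_def', AddMonoidAlgebra.coeff_smul]
  rw [Finsupp.sum_smul_index (by intros; simp), Finsupp.smul_sum]
  exact Finsupp.sum_congr fun β _ => by rw [mul_smul]

lemma polyD_monomial_left (β : Fin s →₀ ℕ) (c : ℂ) (f : MvPolynomial (Fin s) ℂ) :
    polyD (monomial β c) f = c • DOp β f := by
  rcases eq_or_ne c 0 with rfl | hc
  · simp [polyD, MvPolynomial.support_monomial]
  · rw [polyD, MvPolynomial.support_monomial, if_neg hc, Finset.sum_singleton,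
      MvPolynomial.coeff_monomial, if_pos rfl]

lemma polyD_one_left (f : MvPolynomial (Fin s) ℂ) : polyD 1 f = f := by
  have : (1 : MvPolynomial (Fin s) ℂ) = monomial 0 1 := by simp
  rw [this, polyD_monomial_left, DOp_zero, one_smul]

lemma eval_zero_eq_coeff (p : MvPolynomial (Fin s) ℂ) :
    MvPolynomial.eval (0 : Fin s → ℂ) p = MvPolynomial.coeff 0 p := by
  rw [MvPolynomial.eval_zero, ← MvPolynomial.constantCoeff_eq]

lemma eval0_polyD (q f : MvPolynomial (Fin s) ℂ) :
    MvPolynomial.eval (0 : Fin s → ℂ) (polyD q f) =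
      ∑ β ∈ q.support, MvPolynomial.coeff β q * MvPolynomial.coeff β f *
        ∏ j, ((β j).factorial : ℂ) := by
  rw [eval_zero_eq_coeff, polyD, MvPolynomial.coeff_sum]
  refine Finset.sum_congr rfl fun β _ => ?_
  rw [MvPolynomial.smul_eq_C_mul, MvPolynomial.coeff_C_mul, coeff_zero_DOp, mul_assoc]


lemma descFactorial_step (d b : ℕ) :
    Nat.descFactorial d (b + 1) = d * Nat.descFactorial (d - 1) b := by
  cases d with
  | zero => simp
  | succ n => rw [Nat.succ_descFactorial_succ]; simp

lemma DOp_add_single (β : Fin s →₀ ℕ) (i : Fin s) (f : MvPolynomial (Fin s) ℂ) :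
    DOp (β + Finsupp.single i 1) f = DOp β (pderiv i f) := by
  induction f using MvPolynomial.induction_on' with
  | add p q hp hq => rw [map_add, DOp_add, DOp_add, hp, hq]
  | monomial α c =>
    rw [pderiv_monomial, DOp_monomial, DOp_monomial, tsub_add_eq_tsub_tsub_swap]
    set γ : Fin s →₀ ℕ := β + Finsupp.single i 1 with hγ
    set ρ : Fin s →₀ ℕ := α - Finsupp.single i 1 with hρ
    have hγa : ∀ j, γ j = β j + (if i = j then 1 else 0) := fun j => by
      rw [hγ, Finsupp.add_apply, Finsupp.single_apply]
    have hρa : ∀ j, ρ j = α j - (if i = j then 1 else 0) := fun j => by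
      rw [hρ, Finsupp.tsub_apply, Finsupp.single_apply]
    have hcoef : (∏ j, (Nat.descFactorial (α j) (γ j) : ℂ))
        = (α i : ℂ) * ∏ j, (Nat.descFactorial (ρ j) (β j) : ℂ) := by
      rw [← Finset.mul_prod_erase Finset.univ
          (fun j => (Nat.descFactorial (α j) (γ j) : ℂ)) (Finset.mem_univ i),
        ← Finset.mul_prod_erase Finset.univ
          (fun j => (Nat.descFactorial (ρ j) (β j) : ℂ)) (Finset.mem_univ i), ← mul_assoc]
      congr 1
      · rw [hγa i, if_pos rfl, hρa i, if_pos rfl, descFactorial_step]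
        push_cast
        ring
      · refine Finset.prod_congr rfl fun j hj => ?_
        have hij : i ≠ j := fun h => (Finset.mem_erase.mp hj).1 h.symm
        rw [hγa j, if_neg hij, hρa j, if_neg hij, add_zero, Nat.sub_zero]
    rw [hcoef]
    ring_nf

noncomputable def shiftHom (ζ : Fin s → ℂ) :
    MvPolynomial (Fin s) ℂ →ₐ[ℂ] MvPolynomial (Fin s) ℂ :=
  aeval (fun i => X i + C (ζ i))

lemma shiftHom_C (ζ : Fin s → ℂ) (a : ℂ) : shiftHom ζ (C a) = C a := by
  simp [shiftHom, MvPolynomial.algHom_C]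

lemma shiftHom_X (ζ : Fin s → ℂ) (j : Fin s) : shiftHom ζ (X j) = X j + C (ζ j) := by
  simp [shiftHom]

lemma pderiv_shiftHom (ζ : Fin s → ℂ) (i : Fin s) (f : MvPolynomial (Fin s) ℂ) :
    pderiv i (shiftHom ζ f) = shiftHom ζ (pderiv i f) := by
  induction f using MvPolynomial.induction_on with
  | C a => simp [shiftHom]
  | add p q hp hq => simp only [map_add, hp, hq]
  | mul_X p j hp =>
    have h2 : shiftHom ζ (pderiv i (X j)) = pderiv i (X j + C (ζ j)) := by
      rcases eq_or_ne i j with rfl | hij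
      · simp [pderiv_X_self]
      · simp [pderiv_X_of_ne hij, pderiv_X_of_ne, hij]
    simp only [map_mul, pderiv_mul, map_add, hp, shiftHom_X, ← h2]

lemma sum_eq_zero_imp (β : Fin s →₀ ℕ) (h : (β.sum fun _ k => k) = 0) : β = 0 := by
  ext j
  simp only [Finsupp.coe_zero, Pi.zero_apply]
  by_contra hj
  have hmem : j ∈ β.support := Finsupp.mem_support_iff.mpr hj
  have : β j ≤ β.sum fun _ k => k := Finset.single_le_sum (fun _ _ => Nat.zero_le _) hmem
  omega

lemma DOp_shift (ζ : Fin s → ℂ) (β : Fin s →₀ ℕ) (f : MvPolynomial (Fin s) ℂ) :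
    DOp β (shiftHom ζ f) = shiftHom ζ (DOp β f) := by
  suffices h : ∀ (n : ℕ) (β : Fin s →₀ ℕ), (β.sum fun _ k => k) = n →
      ∀ f, DOp β (shiftHom ζ f) = shiftHom ζ (DOp β f) from h _ β rfl f
  intro n
  induction n with
  | zero => intro β hβ f; rw [sum_eq_zero_imp β hβ, DOp_zero, DOp_zero]
  | succ n ih =>
    intro β hβ f
    have hβ0 : β ≠ 0 := by
      intro h; rw [h] at hβ; simp [Finsupp.sum_zero_index] at hβ
    obtain ⟨i, hi⟩ := Finsupp.support_nonempty_iff.mpr hβ0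
    have hih : β i ≠ 0 := Finsupp.mem_support_iff.mp hi
    set β' := β - Finsupp.single i 1 with hβ'
    have hdec : β = β' + Finsupp.single i 1 := by
      ext j
      rw [Finsupp.add_apply, hβ', Finsupp.tsub_apply, Finsupp.single_apply]
      rcases eq_or_ne i j with rfl | hij
      · rw [if_pos rfl]; omega
      · rw [if_neg hij]; omega
    have hsum : (β'.sum fun _ k => k) = n := by
      have := congrArg (fun γ : Fin s →₀ ℕ => γ.sum fun _ (k : ℕ) => k) hdec
      rw [Finsupp.sum_add_index' (fun _ => rfl) (fun _ _ _ => rfl),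
        Finsupp.sum_single_index rfl] at this
      omega
    rw [hdec, DOp_add_single, DOp_add_single, pderiv_shiftHom, ih β' hsum]

lemma polyD_shift (ζ : Fin s → ℂ) (q f : MvPolynomial (Fin s) ℂ) :
    polyD q (shiftHom ζ f) = shiftHom ζ (polyD q f) := by
  rw [polyD, polyD, map_sum]
  exact Finset.sum_congr rfl fun β _ => by
    rw [DOp_shift, map_smul]

lemma eval_shiftHom (x ζ : Fin s → ℂ) (f : MvPolynomial (Fin s) ℂ) :
    MvPolynomial.eval x (shiftHom ζ f) = MvPolynomial.eval (fun i => x i + ζ i) f := by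
  induction f using MvPolynomial.induction_on with
  | C a => simp [shiftHom]
  | add p q hp hq => simp only [map_add, hp, hq]
  | mul_X p j hp => rw [map_mul, map_mul, hp, shiftHom_X]; simp

lemma eval_polyD_shift (ζ : Fin s → ℂ) (q f : MvPolynomial (Fin s) ℂ) :
    MvPolynomial.eval ζ (polyD q f) =
      MvPolynomial.eval (0 : Fin s → ℂ) (polyD q (shiftHom ζ f)) := by
  rw [polyD_shift, eval_shiftHom]
  have : (fun i => (0 : Fin s → ℂ) i + ζ i) = ζ := by funext i; simp
  rw [this]

lemma shiftHom_shiftHom (ζ η : Fin s → ℂ) (f : MvPolynomial (Fin s) ℂ) :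
    shiftHom ζ (shiftHom η f) = shiftHom (fun i => ζ i + η i) f := by
  induction f using MvPolynomial.induction_on with
  | C a => simp [shiftHom]
  | add p q hp hq => simp only [map_add, hp, hq]
  | mul_X p j hp =>
    rw [map_mul, map_mul, map_mul, hp, shiftHom_X, map_add, shiftHom_X, shiftHom_C,
      shiftHom_X, add_assoc, ← C_add]

lemma shiftHom_zero (f : MvPolynomial (Fin s) ℂ) :
    shiftHom (fun _ : Fin s => (0 : ℂ)) f = f := by
  induction f using MvPolynomial.induction_on with
  | C a => simp [shiftHom]
  | add p q hp hq => simp only [map_add, hp, hq]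
  | mul_X p j hp => rw [map_mul, hp, shiftHom_X]; simp

lemma shiftHom_neg_cancel (ζ : Fin s → ℂ) (f : MvPolynomial (Fin s) ℂ) :
    shiftHom ζ (shiftHom (fun i => -ζ i) f) = f := by
  rw [shiftHom_shiftHom]
  have : (fun i => ζ i + -ζ i) = (fun _ : Fin s => (0:ℂ)) := by funext i; ring
  rw [this, shiftHom_zero]


lemma eval0_polyD_monomial_left (m : Fin s →₀ ℕ) (r : ℂ) (f : MvPolynomial (Fin s) ℂ) :
    MvPolynomial.eval (0 : Fin s → ℂ) (polyD (monomial m r) f) =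
      r * MvPolynomial.coeff m f * ∏ j, ((m j).factorial : ℂ) := by
  rw [polyD_monomial_left, eval_zero_eq_coeff, MvPolynomial.coeff_smul, coeff_zero_DOp,
    smul_eq_mul, ← mul_assoc]

lemma apolar (p q f : MvPolynomial (Fin s) ℂ) :
    MvPolynomial.eval (0 : Fin s → ℂ) (polyD (polyD p q) f) =
      MvPolynomial.eval (0 : Fin s → ℂ) (polyD q (p * f)) := by
  induction p using MvPolynomial.induction_on' with
  | add p1 p2 h1 h2 =>
    rw [polyD_add_left, polyD_add_left, map_add, h1, h2, add_mul, polyD_add_right, map_add]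
  | monomial β b =>
  induction q using MvPolynomial.induction_on' with
  | add q1 q2 h1 h2 =>
    rw [polyD_monomial_left, DOp_add, smul_add, polyD_add_left, map_add,
      ← polyD_monomial_left, ← polyD_monomial_left, h1, h2, polyD_add_left, map_add]
  | monomial γ c =>
  induction f using MvPolynomial.induction_on' with
  | add f1 f2 h1 h2 =>
    rw [polyD_add_right, map_add, h1, h2, mul_add, polyD_add_right, map_add]
  | monomial α a =>
    rw [polyD_monomial_left, DOp_monomial, MvPolynomial.smul_monomial,
      eval0_polyD_monomial_left, MvPolynomial.coeff_monomial,
      monomial_mul, eval0_polyD_monomial_left, MvPolynomial.coeff_monomial]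
    simp only [smul_eq_mul]
    rcases eq_or_ne (β + α) γ with hγ | hγ
    · rw [if_pos hγ]
      have hαγ : γ - β = α := by rw [← hγ, add_tsub_cancel_left]
      rw [if_pos hαγ.symm]
      have hfact : (∏ j, (Nat.descFactorial (γ j) (β j) : ℂ)) *
          ∏ j, (((γ - β) j).factorial : ℂ) = ∏ j, ((γ j).factorial : ℂ) := by
        rw [← Finset.prod_mul_distrib]
        refine Finset.prod_congr rfl fun j _ => ?_
        have hle : β j ≤ γ j := by
          rw [← hγ, Finsupp.add_apply]; omega
        have := Nat.factorial_mul_descFactorial hle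
        rw [Finsupp.tsub_apply]
        push_cast [← this]
        ring
      linear_combination (b * c * a) * hfact
    · rw [if_neg hγ]
      rcases eq_or_ne (γ - β : Fin s →₀ ℕ) α with hα | hα
      · rw [if_pos hα.symm]
        have hnle : ¬ β ≤ γ := by
          intro hle
          exact hγ (by rw [← hα, add_tsub_cancel_of_le hle])
        obtain ⟨j, hj⟩ : ∃ j, ¬ β j ≤ γ j := by
          by_contra hall; push_neg at hall
          exact hnle (Finsupp.le_def.mpr (fun i => hall i))
        have hdf : (Nat.descFactorial (γ j) (β j) : ℂ) = 0 := by
          rw [Nat.descFactorial_eq_zero_iff_lt.mpr (by omega)]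
          norm_num
        rw [Finset.prod_eq_zero (Finset.mem_univ j) hdf]
        ring
      · rw [if_neg (fun h => hα h.symm)]
        ring


abbrev Rp (s : ℕ) := MvPolynomial (Fin s) ℂ

noncomputable def pointIdeal (ζ : Fin s → ℂ) : Ideal (Rp s) :=
  Ideal.span (Set.range fun i => (X i : Rp s) - C (ζ i))

lemma generator_mem_pointIdeal (ζ : Fin s → ℂ) (i : Fin s) :
    (X i : Rp s) - C (ζ i) ∈ pointIdeal ζ :=
  Ideal.subset_span ⟨i, rfl⟩

lemma eval_eq_zero_of_mem_pointIdeal {ζ : Fin s → ℂ} {p : Rp s} (hp : p ∈ pointIdeal ζ) :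
    MvPolynomial.eval ζ p = 0 := by
  have hle : pointIdeal ζ ≤ MvPolynomial.vanishingIdeal ℂ {ζ} := by
    rw [pointIdeal, Ideal.span_le]
    rintro _ ⟨i, rfl⟩
    rw [SetLike.mem_coe, MvPolynomial.mem_vanishingIdeal_singleton_iff]
    simp
  exact (MvPolynomial.mem_vanishingIdeal_singleton_iff _ _).mp (hle hp)

lemma pointIdeal_coprime {ζ η : Fin s → ℂ} (h : ζ ≠ η) :
    IsCoprime (pointIdeal ζ) (pointIdeal η) := by
  rw [Ideal.isCoprime_iff_sup_eq]
  obtain ⟨i, hi⟩ : ∃ i, ζ i ≠ η i := by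
    by_contra hall; push_neg at hall; exact h (funext hall)
  have hmem : (C (η i - ζ i) : Rp s) ∈ pointIdeal ζ ⊔ pointIdeal η := by
    have : (C (η i - ζ i) : Rp s) =
        ((X i : Rp s) - C (ζ i)) - ((X i : Rp s) - C (η i)) := by
      rw [C_sub]; ring
    rw [this]
    exact sub_mem (Submodule.mem_sup_left (generator_mem_pointIdeal ζ i))
      (Submodule.mem_sup_right (generator_mem_pointIdeal η i))
  exact Ideal.eq_top_of_isUnit_mem _ hmem
    ((isUnit_iff_ne_zero.mpr (sub_ne_zero.mpr (fun hh => hi hh.symm))).map (C : ℂ →+* Rp s))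

lemma inf_add_le_add_mul (I A B : Ideal (Rp s)) (h : IsCoprime A B) :
    (I + A) ⊓ (I + B) ≤ I + A * B := by
  have hsup : A ⊔ B = ⊤ := Ideal.isCoprime_iff_sup_eq.mp h
  have h1 : (1 : Rp s) ∈ A ⊔ B := by rw [hsup]; exact Submodule.mem_top
  obtain ⟨a, ha, b, hb, hab⟩ := Submodule.mem_sup.mp h1
  intro x hx
  obtain ⟨hx1, hx2⟩ := Submodule.mem_inf.mp hx
  obtain ⟨i1, hi1, a1, ha1, hxa⟩ := Submodule.mem_sup.mp hx1
  obtain ⟨i2, hi2, b1, hb1, hxb⟩ := Submodule.mem_sup.mp hx2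
  have hxx : x = x * a + x * b := by rw [← mul_add, hab, mul_one]
  rw [hxx]
  refine add_mem ?_ ?_
  · -- x * a : use x = i2 + b1
    rw [← hxb, add_mul]
    refine add_mem (Submodule.mem_sup_left (Ideal.mul_mem_right a _ hi2))
      (Submodule.mem_sup_right (mul_comm b1 a ▸ Ideal.mul_mem_mul ha hb1))
  · rw [← hxa, add_mul]
    refine add_mem (Submodule.mem_sup_left (Ideal.mul_mem_right b _ hi1))
      (Submodule.mem_sup_right (Ideal.mul_mem_mul ha1 hb))

lemma inf_le_add_prod {T : Type} [DecidableEq T] (I : Ideal (Rp s)) (t : Finset T)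
    (J : T → Ideal (Rp s))
    (h : ∀ a ∈ t, ∀ b ∈ t, a ≠ b → IsCoprime (J a) (J b)) :
    (t.inf fun a => I + J a) ≤ I + ∏ a ∈ t, J a := by
  induction t using Finset.induction_on with
  | empty =>
    rw [Finset.inf_empty, Finset.prod_empty, Ideal.one_eq_top]
    simp
  | insert _ _ ha _ =>
    rename_i a t ih
    rw [Finset.inf_insert, Finset.prod_insert ha]
    have hcop : IsCoprime (J a) (∏ b ∈ t, J b) :=
      IsCoprime.prod_right fun b hb =>
        h a (Finset.mem_insert_self a t) b (Finset.mem_insert_of_mem hb)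
          (fun hh => ha (hh ▸ hb))
    refine le_trans (inf_le_inf_left _ (ih ?_)) (inf_add_le_add_mul I _ _ hcop)
    intro x hx y hy hxy
    exact h x (Finset.mem_insert_of_mem hx) y (Finset.mem_insert_of_mem hy) hxy

lemma prod_pow_mem_pow (m : Ideal (Rp s)) (g : Fin s → Rp s) (hg : ∀ i, g i ∈ m)
    (α : Fin s → ℕ) (t : Finset (Fin s)) :
    (∏ i ∈ t, g i ^ α i) ∈ m ^ (∑ i ∈ t, α i) := by
  induction t using Finset.induction_on with
  | empty => simp [Ideal.one_eq_top]
  | insert _ _ ha _ =>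
    rename_i a t ih
    rw [Finset.prod_insert ha, Finset.sum_insert ha, pow_add]
    exact Ideal.mul_mem_mul (Ideal.pow_mem_pow (hg a) _) ih

lemma shiftHom_monomial_one (η : Fin s → ℂ) (α : Fin s →₀ ℕ) :
    shiftHom η (monomial α 1) = ∏ i, ((X i : Rp s) + C (η i)) ^ α i := by
  rw [shiftHom, aeval_monomial, map_one, one_mul]
  rw [Finsupp.prod_fintype]
  intro i
  exact pow_zero _

lemma basis_mem_pointIdeal_pow (ζ : Fin s → ℂ) (α : Fin s →₀ ℕ) :
    shiftHom (fun i => -ζ i) (monomial α 1) ∈ pointIdeal ζ ^ (∑ i, α i) := by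
  rw [shiftHom_monomial_one]
  have : ∀ i : Fin s, (X i : Rp s) + C (-ζ i) = X i - C (ζ i) := by
    intro i; rw [map_neg, sub_eq_add_neg]
  simp_rw [this]
  exact prod_pow_mem_pow _ _ (generator_mem_pointIdeal ζ) _ _


lemma polyD_zero_left (f : Rp s) : polyD 0 f = 0 := by
  simp [polyD]

lemma factprod_ne_zero (α : Fin s →₀ ℕ) : (∏ j, ((α j).factorial : ℂ)) ≠ 0 := by
  refine Finset.prod_ne_zero_iff.mpr fun j _ => ?_
  exact_mod_cast Nat.cast_ne_zero.mpr (Nat.factorial_ne_zero _)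

lemma eval0_polyD_monomial_right (q : Rp s) (α : Fin s →₀ ℕ) :
    MvPolynomial.eval (0 : Fin s → ℂ) (polyD q (monomial α 1)) =
      MvPolynomial.coeff α q * ∏ j, ((α j).factorial : ℂ) := by
  rw [eval0_polyD]
  have h : ∀ β ∈ q.support,
      MvPolynomial.coeff β q * MvPolynomial.coeff β (monomial α 1) *
          ∏ j, ((β j).factorial : ℂ)
        = if β = α then MvPolynomial.coeff β q * ∏ j, ((β j).factorial : ℂ) else 0 := by
    intro β _
    rw [MvPolynomial.coeff_monomial]
    rcases eq_or_ne β α with rfl | hβ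
    · rw [if_pos rfl, if_pos rfl, mul_one]
    · rw [if_neg (fun hh => hβ hh.symm), if_neg hβ, mul_zero, zero_mul]
  rw [Finset.sum_congr rfl h, Finset.sum_ite_eq' q.support α]
  split_ifs with hα
  · rfl
  · rw [MvPolynomial.notMem_support_iff.mp hα, zero_mul]

/-- evaluation of `polyD q` at `ζ` as a linear map in `f`. -/
noncomputable def condL (ζ : Fin s → ℂ) (q : Rp s) : Rp s →ₗ[ℂ] ℂ where
  toFun f := MvPolynomial.eval ζ (polyD q f)
  map_add' f g := by
    show MvPolynomial.eval ζ (polyD q (f + g)) = _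
    rw [polyD_add_right, map_add]
  map_smul' c f := by
    show MvPolynomial.eval ζ (polyD q (c • f)) = _
    rw [polyD_smul_right, MvPolynomial.smul_eval, smul_eq_mul, RingHom.id_apply]

lemma condL_apply (ζ : Fin s → ℂ) (q f : Rp s) :
    condL ζ q f = MvPolynomial.eval ζ (polyD q f) := rfl

noncomputable def shiftEquiv (ζ : Fin s → ℂ) : Rp s ≃ₗ[ℂ] Rp s :=
  LinearEquiv.ofLinear (shiftHom (fun i => -ζ i)).toLinearMap (shiftHom ζ).toLinearMap
    (LinearMap.ext fun f => by
      simp only [LinearMap.coe_comp, Function.comp_apply, AlgHom.toLinearMap_apply,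
        LinearMap.id_apply]
      have := shiftHom_shiftHom (fun i => -ζ i) ζ f
      rw [this]
      have h2 : (fun i => -ζ i + ζ i) = (fun _ : Fin s => (0 : ℂ)) := by funext i; ring
      rw [h2, shiftHom_zero])
    (LinearMap.ext fun f => by
      simp only [LinearMap.coe_comp, Function.comp_apply, AlgHom.toLinearMap_apply,
        LinearMap.id_apply]
      exact shiftHom_neg_cancel ζ f)

/-- The basis `(z - ζ)^α` of the polynomial ring. -/
noncomputable def shiftBasis (ζ : Fin s → ℂ) : Module.Basis (Fin s →₀ ℕ) ℂ (Rp s) :=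
  (MvPolynomial.basisMonomials (Fin s) ℂ).map (shiftEquiv ζ)

lemma shiftBasis_apply (ζ : Fin s → ℂ) (α : Fin s →₀ ℕ) :
    shiftBasis ζ α = shiftHom (fun i => -ζ i) (monomial α 1) := by
  rw [shiftBasis, Module.Basis.map_apply]
  have : MvPolynomial.basisMonomials (Fin s) ℂ α = monomial α 1 :=
    congrFun (MvPolynomial.coe_basisMonomials (Fin s) ℂ) α
  rw [this]
  rfl

lemma condL_shiftBasis (ζ : Fin s → ℂ) (q : Rp s) (α : Fin s →₀ ℕ) :
    condL ζ q (shiftBasis ζ α) = MvPolynomial.coeff α q * ∏ j, ((α j).factorial : ℂ) := by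
  rw [condL_apply, shiftBasis_apply, eval_polyD_shift, shiftHom_neg_cancel,
    eval0_polyD_monomial_right]

lemma condL_eq_zero_imp {ζ : Fin s → ℂ} {q : Rp s}
    (h : ∀ f : Rp s, condL ζ q f = 0) : q = 0 := by
  ext α
  have := h (shiftBasis ζ α)
  rw [condL_shiftBasis] at this
  have h0 := factprod_ne_zero α
  have : MvPolynomial.coeff α q = 0 := by
    by_contra hc
    exact (mul_ne_zero hc h0) this
  simpa using this

/-- The space of differential conditions at `ζ` annihilating `I`. -/
noncomputable def Qspace (I : Ideal (Rp s)) (ζ : Fin s → ℂ) : Submodule ℂ (Rp s) where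
  carrier := {q | ∀ f ∈ I, MvPolynomial.eval ζ (polyD q f) = 0}
  zero_mem' := by
    intro f _
    rw [polyD_zero_left, map_zero]
  add_mem' := by
    intro q r hq hr f hf
    rw [polyD_add_left, map_add, hq f hf, hr f hf, add_zero]
  smul_mem' := by
    intro c q hq f hf
    rw [polyD_smul_left, MvPolynomial.smul_eval, hq f hf, mul_zero]

lemma mem_Qspace_iff {I : Ideal (Rp s)} {ζ : Fin s → ℂ} {q : Rp s} :
    q ∈ Qspace I ζ ↔ ∀ f ∈ I, MvPolynomial.eval ζ (polyD q f) = 0 := Iff.rfl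

lemma Qspace_dinvariant (I : Ideal (Rp s)) (ζ : Fin s → ℂ) :
    ∀ p : Rp s, ∀ q ∈ Qspace I ζ, polyD p q ∈ Qspace I ζ := by
  intro p q hq f hf
  have key : MvPolynomial.eval ζ (polyD (polyD p q) f) =
      MvPolynomial.eval ζ (polyD q (shiftHom (fun i => -ζ i) p * f)) := by
    rw [eval_polyD_shift, apolar, eval_polyD_shift ζ q]
    congr 2
    rw [map_mul, shiftHom_neg_cancel]
  rw [key]
  exact hq _ (Ideal.mul_mem_left I _ hf)

lemma one_mem_Qspace {I : Ideal (Rp s)} {ζ : Fin s → ℂ} (hζ : ζ ∈ MvPolynomial.zeroLocus ℂ I) :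
    (1 : Rp s) ∈ Qspace I ζ := by
  intro f hf
  rw [polyD_one_left]
  exact hζ f hf


lemma aeval_eq_eval' (x : Fin s → ℂ) (g : Rp s) :
    (MvPolynomial.aeval x) g = MvPolynomial.eval x g := by
  rw [← MvPolynomial.coe_aeval_eq_eval]
  rfl

lemma zeroLocus_finite (I : Ideal (Rp s)) (hfd : FiniteDimensional ℂ (Rp s ⧸ I)) :
    (MvPolynomial.zeroLocus ℂ I).Finite := by
  have : Module.Finite ℂ (Rp s ⧸ I) := hfd
  set p : Fin s → Polynomial ℂ := fun i => minpoly ℂ (Ideal.Quotient.mk I (X i)) with hp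
  have hint : ∀ i, IsIntegral ℂ (Ideal.Quotient.mk I (X i : Rp s)) := fun i =>
    IsIntegral.of_finite ℂ _
  have hne : ∀ i, p i ≠ 0 := fun i => minpoly.ne_zero (hint i)
  have hsub : MvPolynomial.zeroLocus ℂ I ⊆
      Set.pi Set.univ (fun i => {x : ℂ | (p i).IsRoot x}) := by
    intro x hx i _
    have hmem : (Polynomial.aeval (X i : Rp s)) (p i) ∈ I := by
      rw [← Ideal.Quotient.eq_zero_iff_mem]
      have h1 := Polynomial.aeval_algHom_apply (Ideal.Quotient.mkₐ ℂ I) (X i : Rp s) (p i)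
      rw [Ideal.Quotient.mkₐ_eq_mk] at h1
      rw [← h1, minpoly.aeval]
    have h0 := hx _ hmem
    have h2 := Polynomial.aeval_algHom_apply (MvPolynomial.aeval x) (X i : Rp s) (p i)
    rw [MvPolynomial.aeval_X, h0] at h2
    have h3 : Polynomial.aeval (x i) (p i) = Polynomial.eval (x i) (p i) :=
      congrFun (Polynomial.coe_aeval_eq_eval (x i)) (p i)
    show (p i).IsRoot (x i)
    rw [Polynomial.IsRoot, ← h3, h2]
  exact Set.Finite.subset (Set.Finite.pi fun i => Polynomial.finite_setOf_isRoot (hne i)) hsub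

lemma zeroLocus_nonempty (I : Ideal (Rp s)) (hI : I ≠ ⊤) :
    (MvPolynomial.zeroLocus ℂ I).Nonempty := by
  by_contra h
  rw [Set.not_nonempty_iff_eq_empty] at h
  have h2 := MvPolynomial.vanishingIdeal_zeroLocus_eq_radical (K := ℂ) I
  rw [h, MvPolynomial.vanishingIdeal_empty] at h2
  exact hI (Ideal.radical_eq_top.mp h2.symm)

lemma fd_restrict (I : Ideal (Rp s)) (h : FiniteDimensional ℂ (Rp s ⧸ I)) :
    FiniteDimensional ℂ
      (Rp s ⧸ (Submodule.restrictScalars ℂ (I : Submodule (Rp s) (Rp s)))) :=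
  LinearEquiv.finiteDimensional
    (Submodule.Quotient.restrictScalarsEquiv ℂ (I : Submodule (Rp s) (Rp s))).symm

lemma fd_unrestrict (I : Ideal (Rp s))
    (h : FiniteDimensional ℂ
      (Rp s ⧸ (Submodule.restrictScalars ℂ (I : Submodule (Rp s) (Rp s))))) :
    FiniteDimensional ℂ (Rp s ⧸ I) :=
  LinearEquiv.finiteDimensional
    (Submodule.Quotient.restrictScalarsEquiv ℂ (I : Submodule (Rp s) (Rp s)))

lemma condL_add_left (ζ : Fin s → ℂ) (q r : Rp s) :
    condL ζ (q + r) = condL ζ q + condL ζ r := by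
  refine LinearMap.ext fun f => ?_
  show MvPolynomial.eval ζ (polyD (q + r) f) = (condL ζ q + condL ζ r) f
  rw [LinearMap.add_apply, condL_apply, condL_apply, polyD_add_left, map_add]

lemma condL_smul_left (ζ : Fin s → ℂ) (c : ℂ) (q : Rp s) :
    condL ζ (c • q) = c • condL ζ q := by
  refine LinearMap.ext fun f => ?_
  show MvPolynomial.eval ζ (polyD (c • q) f) = (c • condL ζ q) f
  rw [LinearMap.smul_apply, condL_apply, polyD_smul_left, MvPolynomial.smul_eval, smul_eq_mul]

lemma Qspace_findim (I : Ideal (Rp s)) (ζ : Fin s → ℂ)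
    (hfd : FiniteDimensional ℂ (Rp s ⧸ I)) :
    FiniteDimensional ℂ (Qspace I ζ) := by
  haveI h1 := fd_restrict I hfd
  set S := Submodule.restrictScalars ℂ (I : Submodule (Rp s) (Rp s)) with hS
  have hker : ∀ q : Qspace I ζ, S ≤ LinearMap.ker (condL ζ (q : Rp s)) := by
    intro q f hf
    rw [LinearMap.mem_ker, condL_apply]
    exact q.2 f hf
  let Θ : Qspace I ζ →ₗ[ℂ] ((Rp s ⧸ S) →ₗ[ℂ] ℂ) :=
    { toFun := fun q => S.liftQ (condL ζ (q : Rp s)) (hker q)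
      map_add' := by
        intro q r
        refine Submodule.linearMap_qext _ ?_
        ext f
        simp only [LinearMap.comp_apply, Submodule.mkQ_apply, Submodule.liftQ_apply,
          LinearMap.add_apply, Submodule.coe_add, condL_add_left]
      map_smul' := by
        intro c q
        refine Submodule.linearMap_qext _ ?_
        ext f
        simp only [LinearMap.comp_apply, Submodule.mkQ_apply, Submodule.liftQ_apply,
          RingHom.id_apply, LinearMap.smul_apply, SetLike.val_smul, condL_smul_left] }
  refine FiniteDimensional.of_injective Θ ?_
  rw [← LinearMap.ker_eq_bot]
  rw [Submodule.eq_bot_iff]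
  intro q hq
  rw [LinearMap.mem_ker] at hq
  have hq0 : ∀ f : Rp s, condL ζ (q : Rp s) f = 0 := by
    intro f
    have : Θ q (Submodule.Quotient.mk f) = 0 := by rw [hq]; rfl
    simpa [Θ, Submodule.liftQ_apply] using this
  have : (q : Rp s) = 0 := condL_eq_zero_imp hq0
  exact Subtype.ext this


lemma mem_add_pow_of_conditions (I : Ideal (Rp s)) (N : ℕ) (ζ : Fin s → ℂ) (f : Rp s)
    (hf : ∀ q ∈ Qspace I ζ, MvPolynomial.eval ζ (polyD q f) = 0) :
    f ∈ I + pointIdeal ζ ^ N := by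
  classical
  set Jζ : Ideal (Rp s) := I + pointIdeal ζ ^ N with hJ
  set S : Submodule ℂ (Rp s) :=
    Submodule.restrictScalars ℂ (Jζ : Submodule (Rp s) (Rp s)) with hS
  suffices h : f ∈ S from h
  have hmk : (Submodule.Quotient.mk f : Rp s ⧸ S) = 0 → f ∈ S :=
    fun h => (Submodule.Quotient.mk_eq_zero S).mp h
  apply hmk
  haveI hfree : Module.Free ℂ (Rp s ⧸ S) := Module.Free.of_divisionRing ℂ _
  haveI hproj : Module.Projective ℂ (Rp s ⧸ S) := Module.Projective.of_free
  rw [← Module.forall_dual_apply_eq_zero_iff ℂ]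
  intro φ
  set lam : Rp s →ₗ[ℂ] ℂ := φ.comp S.mkQ with hlam
  have hlam_apply : ∀ g : Rp s, lam g = φ (Submodule.Quotient.mk g) := fun g => rfl
  have hlamS : ∀ g ∈ S, lam g = 0 := by
    intro g hg
    rw [hlam_apply, (Submodule.Quotient.mk_eq_zero S).mpr hg, map_zero]
  set M : Fin s →₀ ℕ := Finsupp.equivFunOnFinite.symm (fun _ : Fin s => N) with hM
  have hMi : ∀ i, M i = N := fun i => rfl
  set q : Rp s := ∑ α ∈ Finset.Iic M,
      ((∏ j, ((α j).factorial : ℂ))⁻¹ * lam (shiftBasis ζ α)) • monomial α 1 with hq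
  have hcoeff : ∀ α : Fin s →₀ ℕ, MvPolynomial.coeff α q =
      if α ∈ Finset.Iic M then (∏ j, ((α j).factorial : ℂ))⁻¹ * lam (shiftBasis ζ α)
      else 0 := by
    intro α
    rw [hq, MvPolynomial.coeff_sum]
    have h : ∀ α' ∈ Finset.Iic M,
        MvPolynomial.coeff α
          (((∏ j, ((α' j).factorial : ℂ))⁻¹ * lam (shiftBasis ζ α')) • monomial α' 1)
        = if α' = α then (∏ j, ((α' j).factorial : ℂ))⁻¹ * lam (shiftBasis ζ α') else 0 := by
      intro α' _
      rw [MvPolynomial.coeff_smul, MvPolynomial.coeff_monomial, smul_eq_mul, mul_ite,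
        mul_one, mul_zero]
    rw [Finset.sum_congr rfl h, Finset.sum_ite_eq' (Finset.Iic M) α]
  have hbig : ∀ α : Fin s →₀ ℕ, α ∉ Finset.Iic M → lam (shiftBasis ζ α) = 0 := by
    intro α hα
    apply hlamS
    have hN : N ≤ ∑ i, α i := by
      rw [Finset.mem_Iic] at hα
      obtain ⟨i, hi⟩ : ∃ i, ¬ α i ≤ M i := by
        by_contra hall; push_neg at hall
        exact hα (Finsupp.le_def.mpr fun i => hall i)
      rw [hMi i] at hi
      calc N ≤ α i := by omega
        _ ≤ ∑ j, α j := Finset.single_le_sum (fun j _ => Nat.zero_le _) (Finset.mem_univ i)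
    have hb := basis_mem_pointIdeal_pow ζ α
    rw [shiftBasis_apply]
    show shiftHom (fun i => -ζ i) (monomial α 1) ∈ Jζ
    have hle : pointIdeal ζ ^ (∑ i, α i) ≤ pointIdeal ζ ^ N := Ideal.pow_le_pow_right hN
    exact Submodule.mem_sup_right (hle hb)
  have hagree : condL ζ q = lam := by
    refine Module.Basis.ext (shiftBasis ζ) fun α => ?_
    rw [condL_shiftBasis, hcoeff α]
    by_cases hα : α ∈ Finset.Iic M
    · rw [if_pos hα, mul_comm ((∏ j, ((α j).factorial : ℂ))⁻¹) _, mul_assoc,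
        inv_mul_cancel₀ (factprod_ne_zero α), mul_one]
    · rw [if_neg hα, zero_mul, hbig α hα]
  have hqQ : q ∈ Qspace I ζ := by
    intro g hg
    rw [← condL_apply, hagree]
    exact hlamS g (Submodule.mem_sup_left hg)
  have hfq := hf q hqQ
  rw [← condL_apply, hagree, hlam_apply] at hfq
  exact hfq


lemma forward_direction (I : Ideal (Rp s)) (hI : I ≠ ⊤)
    (hfd : FiniteDimensional ℂ (Rp s ⧸ I)) :
    ∃ Z : Finset (Fin s → ℂ), Z.Nonempty ∧
      ∃ Q : (Fin s → ℂ) → Submodule ℂ (Rp s),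
        (∀ ζ ∈ Z, Q ζ ≠ ⊥ ∧ FiniteDimensional ℂ (Q ζ) ∧ DInvariant (Q ζ)) ∧
        ∀ f : Rp s, f ∈ I ↔ ∀ ζ ∈ Z, ∀ q ∈ Q ζ,
          MvPolynomial.eval ζ (polyD q f) = 0 := by
  classical
  have hfin := zeroLocus_finite I hfd
  set Z : Finset (Fin s → ℂ) := hfin.toFinset with hZ
  have hZmem : ∀ ζ, ζ ∈ Z ↔ ζ ∈ MvPolynomial.zeroLocus ℂ I := fun ζ =>
    Set.Finite.mem_toFinset hfin
  have hZne : Z.Nonempty := by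
    obtain ⟨ζ, hζ⟩ := zeroLocus_nonempty I hI
    exact ⟨ζ, (hZmem ζ).mpr hζ⟩
  refine ⟨Z, hZne, Qspace I, ?_, ?_⟩
  · intro ζ hζ
    refine ⟨?_, Qspace_findim I ζ hfd, Qspace_dinvariant I ζ⟩
    intro hbot
    have h1 : (1 : Rp s) ∈ Qspace I ζ := one_mem_Qspace ((hZmem ζ).mp hζ)
    rw [hbot] at h1
    exact one_ne_zero ((Submodule.mem_bot ℂ).mp h1)
  · intro f
    constructor
    · intro hfI ζ hζ q hq
      exact hq f hfI
    · intro hcond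
      have hfg : I.radical.FG := IsNoetherian.noetherian _
      obtain ⟨N, hN⟩ := Ideal.exists_radical_pow_le_of_fg I hfg
      have hmemf : ∀ ζ ∈ Z, f ∈ I + pointIdeal ζ ^ N := fun ζ hζ =>
        mem_add_pow_of_conditions I N ζ f (fun q hq => hcond ζ hζ q hq)
      have hinf : f ∈ Z.inf (fun ζ => I + pointIdeal ζ ^ N) :=
        Submodule.mem_finsetInf.mpr hmemf
      have hcop : ∀ a ∈ Z, ∀ b ∈ Z, a ≠ b →
          IsCoprime (pointIdeal a ^ N) (pointIdeal b ^ N) :=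
        fun a _ b _ hab => (pointIdeal_coprime hab).pow
      have h2 := inf_le_add_prod I Z (fun ζ => pointIdeal ζ ^ N) hcop
      have h3 : (∏ ζ ∈ Z, pointIdeal ζ ^ N) ≤ I := by
        rw [Finset.prod_pow]
        refine le_trans (Ideal.pow_right_mono ?_ N) hN
        refine le_trans Ideal.prod_le_inf ?_
        rw [← MvPolynomial.vanishingIdeal_zeroLocus_eq_radical (K := ℂ) I]
        intro p hp
        rw [MvPolynomial.mem_vanishingIdeal_iff]
        intro x hx
        exact eval_eq_zero_of_mem_pointIdeal
          (Submodule.mem_finsetInf.mp hp x ((hZmem x).mpr hx))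
      have h4 : I + (∏ ζ ∈ Z, pointIdeal ζ ^ N) ≤ I := sup_le le_rfl h3
      exact h4 (h2 hinf)

lemma reverse_direction (I : Ideal (Rp s)) (Z : Finset (Fin s → ℂ)) (hZne : Z.Nonempty)
    (Q : (Fin s → ℂ) → Submodule ℂ (Rp s))
    (hQ : ∀ ζ ∈ Z, Q ζ ≠ ⊥ ∧ FiniteDimensional ℂ (Q ζ) ∧ DInvariant (Q ζ))
    (hmem : ∀ f : Rp s, f ∈ I ↔ ∀ ζ ∈ Z, ∀ q ∈ Q ζ,
      MvPolynomial.eval ζ (polyD q f) = 0) :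
    I ≠ ⊤ ∧ FiniteDimensional ℂ (Rp s ⧸ I) := by
  classical
  constructor
  · intro htop
    obtain ⟨ζ0, hζ0⟩ := hZne
    obtain ⟨hne, hfd0, hDinv⟩ := hQ ζ0 hζ0
    obtain ⟨p, hp, hp0⟩ := (Submodule.ne_bot_iff _).mp hne
    obtain ⟨β, hβ⟩ := MvPolynomial.support_nonempty.mpr hp0
    have hq : polyD (monomial β 1) p ∈ Q ζ0 := hDinv (monomial β 1) p hp
    rw [polyD_monomial_left, one_smul] at hq
    have h1 : (1 : Rp s) ∈ I := htop ▸ Submodule.mem_top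
    have h0 := (hmem 1).mp h1 ζ0 hζ0 _ hq
    rw [eval_polyD_shift, map_one] at h0
    have hone : (1 : Rp s) = monomial 0 1 := by simp
    rw [hone, eval0_polyD_monomial_right, coeff_zero_DOp] at h0
    have hcoeff : MvPolynomial.coeff β p ≠ 0 := MvPolynomial.mem_support_iff.mp hβ
    exact (mul_ne_zero (mul_ne_zero hcoeff (factprod_ne_zero β))
      (factprod_ne_zero 0)) h0
  · haveI hQfd : ∀ ζ : Z, FiniteDimensional ℂ (Q ζ) := fun ζ => (hQ ζ ζ.2).2.1
    let Ψ : (ζ : Fin s → ℂ) → Rp s →ₗ[ℂ] ((Q ζ) →ₗ[ℂ] ℂ) := fun ζ =>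
      { toFun := fun f =>
          { toFun := fun q => MvPolynomial.eval ζ (polyD (q : Rp s) f)
            map_add' := by
              intro q r
              show MvPolynomial.eval ζ (polyD ((q : Rp s) + (r : Rp s)) f) =
                MvPolynomial.eval ζ (polyD (q : Rp s) f) +
                  MvPolynomial.eval ζ (polyD (r : Rp s) f)
              rw [polyD_add_left, map_add]
            map_smul' := by
              intro c q
              show MvPolynomial.eval ζ (polyD (c • (q : Rp s)) f) =
                (RingHom.id ℂ) c • MvPolynomial.eval ζ (polyD (q : Rp s) f)
              rw [polyD_smul_left, MvPolynomial.smul_eval, smul_eq_mul, RingHom.id_apply] }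
        map_add' := by
          intro f g
          refine LinearMap.ext fun q => ?_
          show MvPolynomial.eval ζ (polyD (q : Rp s) (f + g)) =
            MvPolynomial.eval ζ (polyD (q : Rp s) f) +
              MvPolynomial.eval ζ (polyD (q : Rp s) g)
          rw [polyD_add_right, map_add]
        map_smul' := by
          intro c f
          refine LinearMap.ext fun q => ?_
          show MvPolynomial.eval ζ (polyD (q : Rp s) (c • f)) =
            (RingHom.id ℂ) c • MvPolynomial.eval ζ (polyD (q : Rp s) f)
          rw [polyD_smul_right, MvPolynomial.smul_eval, smul_eq_mul, RingHom.id_apply] }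
    let Φ : Rp s →ₗ[ℂ] ((ζ : Z) → ((Q ζ) →ₗ[ℂ] ℂ)) := LinearMap.pi (fun ζ : Z => Ψ ζ)
    have hle : Submodule.restrictScalars ℂ (I : Submodule (Rp s) (Rp s)) ≤
        LinearMap.ker Φ := by
      intro g hg
      rw [LinearMap.mem_ker]
      funext ζ
      refine LinearMap.ext fun q => ?_
      have := (hmem g).mp hg ζ ζ.2 q q.2
      simpa [Φ, Ψ] using this
    have hle2 : LinearMap.ker Φ ≤
        Submodule.restrictScalars ℂ (I : Submodule (Rp s) (Rp s)) := by
      intro g hg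
      rw [LinearMap.mem_ker] at hg
      refine (hmem g).mpr fun ζ hζ q hq => ?_
      have h := DFunLike.congr_fun (congrFun hg ⟨ζ, hζ⟩) ⟨q, hq⟩
      simpa [Φ, Ψ] using h
    apply fd_unrestrict
    have hinj : Function.Injective
        ((Submodule.restrictScalars ℂ (I : Submodule (Rp s) (Rp s))).liftQ Φ hle) := by
      rw [← LinearMap.ker_eq_bot]
      exact Submodule.ker_liftQ_eq_bot _ Φ hle hle2
    exact FiniteDimensional.of_injective _ hinj

end Stmt5Aux


/-- Gröbner: an ideal `I ⊆ ℂ[z_1,…,z_s]` is zero dimensional (proper with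
finite-dimensional quotient) if and only if membership in `I` is characterized by the
vanishing of finitely many `D`-invariant spaces of differential conditions at finitely
many points. -/
theorem stmt5 {s : ℕ} (I : Ideal (MvPolynomial (Fin s) ℂ)) :
    (I ≠ ⊤ ∧ FiniteDimensional ℂ (MvPolynomial (Fin s) ℂ ⧸ I)) ↔
      ∃ Z : Finset (Fin s → ℂ), Z.Nonempty ∧
        ∃ Q : (Fin s → ℂ) → Submodule ℂ (MvPolynomial (Fin s) ℂ),
          (∀ ζ ∈ Z, Q ζ ≠ ⊥ ∧ FiniteDimensional ℂ (Q ζ) ∧ DInvariant (Q ζ)) ∧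
          ∀ f : MvPolynomial (Fin s) ℂ,
            f ∈ I ↔ ∀ ζ ∈ Z, ∀ q ∈ Q ζ, MvPolynomial.eval ζ (polyD q f) = 0 := by
  constructor
  · rintro ⟨hI, hfd⟩
    exact Stmt5Aux.forward_direction I hI hfd
  · rintro ⟨Z, hZne, Q, hQ, hmem⟩
    exact Stmt5Aux.reverse_direction I Z hZne Q hQ hmem
end

section
/- Let θ ∈ (ℂ∖{0})^s and let Q_θ be a finite-dimensional D-invariant subspace of ℂ[z_1,…,z_s]. Then the space P_θ := σ₋ L σ_θ Q_θ = {σ₋(L(σ_θ q)) : q ∈ Q_θ} is translation invariant: if p ∈ P_θ and y ∈ ℂ^s, then the polynomial x ↦ p(x+y) belongs to P_θ. -/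
open MvPolynomial

/-- The forward shift `(τ_j f)(x) = f(x + ε_j)` as a linear endomorphism. -/
noncomputable def shiftL {s : ℕ} (j : Fin s) :
    Module.End ℂ (MvPolynomial (Fin s) ℂ) :=
  (MvPolynomial.aeval fun i =>
      MvPolynomial.X i + if i = j then 1 else 0 : MvPolynomial (Fin s) ℂ →ₐ[ℂ]
        MvPolynomial (Fin s) ℂ).toLinearMap

/-- The forward difference `Δ_j = τ_j − I`. -/
noncomputable def delta1 {s : ℕ} (j : Fin s) :
    Module.End ℂ (MvPolynomial (Fin s) ℂ) :=
  shiftL j - 1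

/-- The iterated forward difference `Δ^γ = Δ_1^{γ_1} ∘ ⋯ ∘ Δ_s^{γ_s}`. -/
noncomputable def deltaOp {s : ℕ} (γ : Fin s → ℕ) :
    Module.End ℂ (MvPolynomial (Fin s) ℂ) :=
  (List.ofFn fun j => delta1 j ^ γ j).prod

/-- The operator `L`: `(Lf)(x) = Σ_{|γ| ≤ deg f} (Δ^γ f)(0)·x^γ/γ!`. -/
noncomputable def LOp {s : ℕ} (f : MvPolynomial (Fin s) ℂ) : MvPolynomial (Fin s) ℂ :=
  ∑ γ ∈ (Fintype.piFinset fun _ : Fin s => Finset.range (f.totalDegree + 1)).filter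
      (fun γ => ∑ j, γ j ≤ f.totalDegree),
    (MvPolynomial.eval (0 : Fin s → ℂ) (deltaOp γ f) / ∏ j, (Nat.factorial (γ j) : ℂ)) •
      ∏ j, (MvPolynomial.X j : MvPolynomial (Fin s) ℂ) ^ γ j

/-- The scaling operator `(σ_θ f)(z) = f(θ_1 z_1,…,θ_s z_s)`. -/
noncomputable def scaleOp {s : ℕ} (θ : Fin s → ℂ) (f : MvPolynomial (Fin s) ℂ) :
    MvPolynomial (Fin s) ℂ :=
  MvPolynomial.aeval (fun j => MvPolynomial.C (θ j) * MvPolynomial.X j) f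

/-- The space `P_θ = σ₋ L σ_θ Q`. -/
noncomputable def Pspace {s : ℕ} (θ : Fin s → ℂ)
    (Q : Submodule ℂ (MvPolynomial (Fin s) ℂ)) :
    Submodule ℂ (MvPolynomial (Fin s) ℂ) :=
  Submodule.span ℂ
    ((fun q => scaleOp (fun _ => -1) (LOp (scaleOp θ q))) '' (Q : Set (MvPolynomial (Fin s) ℂ)))

lemma DOp_eq_sum {s : ℕ} (β : Fin s →₀ ℕ) (f : MvPolynomial (Fin s) ℂ) :
    DOp β f = (AddMonoidAlgebra.coeff f).sum fun δ c =>
      MvPolynomial.monomial (δ - β) (c * ∏ j, (Nat.descFactorial (δ j) (β j) : ℂ)) := rfl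

lemma DOp_monomial {s : ℕ} (β δ : Fin s →₀ ℕ) (a : ℂ) :
    DOp β (monomial δ a) =
      monomial (δ - β) (a * ∏ j, (Nat.descFactorial (δ j) (β j) : ℂ)) := by
  rw [DOp_eq_sum]
  exact MvPolynomial.sum_monomial_eq (by simp)

lemma DOp_add {s : ℕ} (β : Fin s →₀ ℕ) (f g : MvPolynomial (Fin s) ℂ) :
    DOp β (f + g) = DOp β f + DOp β g := by
  rw [DOp_eq_sum, DOp_eq_sum, DOp_eq_sum, AddMonoidAlgebra.coeff_add]
  exact Finsupp.sum_add_index' (by simp) (by intros; rw [add_mul, map_add])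

lemma DOp_zero_poly {s : ℕ} (β : Fin s →₀ ℕ) : DOp β (0 : MvPolynomial (Fin s) ℂ) = 0 := by
  simp [DOp_eq_sum]

lemma DOp_zero {s : ℕ} (f : MvPolynomial (Fin s) ℂ) : DOp 0 f = f := by
  conv_rhs => rw [← MvPolynomial.support_sum_monomial_coeff f]
  unfold DOp
  refine Finset.sum_congr rfl fun δ hδ => ?_
  simp

lemma DOp_succ {s : ℕ} (β : Fin s →₀ ℕ) (j : Fin s) (f : MvPolynomial (Fin s) ℂ) :
    DOp (β + Finsupp.single j 1) f = MvPolynomial.pderiv j (DOp β f) := by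
  induction f using MvPolynomial.induction_on' with
  | monomial δ a =>
    classical
    rw [DOp_monomial, DOp_monomial, MvPolynomial.pderiv_monomial]
    rw [mul_assoc]
    congr 1
    · rw [tsub_add_eq_tsub_tsub]
    · congr 1
      rw [← Finset.mul_prod_erase Finset.univ _ (Finset.mem_univ j),
          ← Finset.mul_prod_erase Finset.univ
            (fun i => ((Nat.descFactorial (δ i) (β i) : ℂ))) (Finset.mem_univ j)]
      have hrest : ∏ i ∈ Finset.univ.erase j, ((Nat.descFactorial (δ i) (((β + Finsupp.single j 1 : Fin s →₀ ℕ)) i) : ℂ))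
          = ∏ i ∈ Finset.univ.erase j, ((Nat.descFactorial (δ i) (β i) : ℂ)) := by
        refine Finset.prod_congr rfl fun i hi => ?_
        have hij : i ≠ j := Finset.ne_of_mem_erase hi
        simp [Finsupp.single_apply, hij, Ne.symm hij]
      rw [hrest]
      have hj : ((β + Finsupp.single j 1 : Fin s →₀ ℕ)) j = β j + 1 := by simp
      rw [hj, Nat.descFactorial_succ, Finsupp.tsub_apply]
      push_cast
      ring
  | add p q hp hq => rw [DOp_add, DOp_add, hp, hq, map_add]

lemma DOp_smul {s : ℕ} (β : Fin s →₀ ℕ) (c : ℂ) (f : MvPolynomial (Fin s) ℂ) :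
    DOp β (c • f) = c • DOp β f := by
  rw [DOp_eq_sum, DOp_eq_sum, AddMonoidAlgebra.coeff_smul]
  rw [Finsupp.sum_smul_index (by simp), Finsupp.smul_sum]
  refine Finsupp.sum_congr fun δ _ => ?_
  simp [MvPolynomial.smul_monomial, smul_eq_mul, mul_assoc]

noncomputable def DOpL {s : ℕ} (β : Fin s →₀ ℕ) :
    MvPolynomial (Fin s) ℂ →ₗ[ℂ] MvPolynomial (Fin s) ℂ where
  toFun := DOp β
  map_add' := DOp_add β
  map_smul' := DOp_smul β

lemma DOp_mem {s : ℕ} (P : Submodule ℂ (MvPolynomial (Fin s) ℂ))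
    (hP : ∀ j, ∀ p ∈ P, MvPolynomial.pderiv j p ∈ P) :
    ∀ (β : Fin s →₀ ℕ), ∀ p ∈ P, DOp β p ∈ P := by
  suffices h : ∀ (n : ℕ) (β : Fin s →₀ ℕ), (∑ i, β i) = n → ∀ p ∈ P, DOp β p ∈ P by
    intro β p hp
    exact h _ β rfl p hp
  intro n
  induction n with
  | zero =>
    intro β hβ p hp
    have : β = 0 := by
      ext i
      exact Finset.sum_eq_zero_iff.mp hβ i (Finset.mem_univ i)
    rw [this, DOp_zero]
    exact hp
  | succ n ih =>
    intro β hβ p hp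
    have hne : ∃ j, β j ≠ 0 := by
      by_contra hcon
      push_neg at hcon
      simp [hcon] at hβ
    obtain ⟨j, hj⟩ := hne
    set β' := β - Finsupp.single j 1 with hβ'
    have hsplit : β = β' + Finsupp.single j 1 := by
      ext i
      rcases eq_or_ne i j with rfl | hij
      · simp [hβ', Nat.sub_add_cancel (Nat.one_le_iff_ne_zero.mpr hj)]
      · simp [hβ', Finsupp.single_apply, Ne.symm hij]
    have hsum : (∑ i, β' i) = n := by
      have h2 : (∑ i, β i) = (∑ i, β' i) + 1 := by
        rw [hsplit]
        simp only [Finsupp.add_apply]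
        rw [Finset.sum_add_distrib]
        congr 1
        simp [Finsupp.single_apply]
      omega
    rw [hsplit, DOp_succ]
    exact hP j _ (ih β' hsum p hp)

lemma coeffid {s : ℕ} (a : ℂ) (y : Fin s → ℂ) (δ β : Fin s → ℕ) :
    a * ((∏ i, (y i) ^ (β i)) * ∏ i, ((δ i).choose (β i) : ℂ)) =
      (∏ i, y i ^ β i / ((β i).factorial : ℂ)) *
        (a * ∏ i, ((δ i).descFactorial (β i) : ℂ)) := by
  have hdesc : ∀ i : Fin s, ((δ i).descFactorial (β i) : ℂ) =
      ((β i).factorial : ℂ) * ((δ i).choose (β i) : ℂ) := by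
    intro i
    exact_mod_cast congrArg (Nat.cast : ℕ → ℂ) (Nat.descFactorial_eq_factorial_mul_choose (δ i) (β i))
  rw [Finset.prod_congr rfl (fun i _ => hdesc i), Finset.prod_mul_distrib,
    Finset.prod_div_distrib]
  have hfac : (∏ i, ((β i).factorial : ℂ)) ≠ 0 :=
    Finset.prod_ne_zero_iff.mpr fun i _ => Nat.cast_ne_zero.mpr (Nat.factorial_ne_zero _)
  field_simp

lemma Xprod {s : ℕ} (γ : Fin s → ℕ) :
    (∏ i, (MvPolynomial.X i : MvPolynomial (Fin s) ℂ) ^ γ i) =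
      monomial (Finsupp.equivFunOnFinite.symm γ) 1 := by
  rw [MvPolynomial.monomial_eq, MvPolynomial.C_1, one_mul,
    Finsupp.prod_fintype _ _ (by simp)]
  simp

lemma taylor_monomial {s : ℕ} (y : Fin s → ℂ) (N : ℕ) (δ : Fin s →₀ ℕ) (a : ℂ)
    (hδ : ∀ j, δ j ≤ N) :
    MvPolynomial.aeval (fun i => MvPolynomial.X i + MvPolynomial.C (y i)) (monomial δ a) =
      ∑ β ∈ Fintype.piFinset (fun _ : Fin s => Finset.range (N + 1)),
        (∏ j, y j ^ β j / ((β j).factorial : ℂ)) •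
          DOp (Finsupp.equivFunOnFinite.symm β) (monomial δ a) := by
  rw [MvPolynomial.aeval_monomial, Finsupp.prod_fintype _ _ (by simp)]
  have hfactor : ∀ i : Fin s,
      (MvPolynomial.X i + MvPolynomial.C (y i) : MvPolynomial (Fin s) ℂ) ^ δ i =
        ∑ k ∈ Finset.range (N + 1),
          (MvPolynomial.C (y i)) ^ k * (MvPolynomial.X i) ^ (δ i - k) *
            MvPolynomial.C ((δ i).choose k : ℂ) := by
    intro i
    have h1 : ∑ k ∈ Finset.range (δ i + 1),
          (MvPolynomial.C (y i)) ^ k * (MvPolynomial.X i) ^ (δ i - k) *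
            (((δ i).choose k : ℕ) : MvPolynomial (Fin s) ℂ)
        = ∑ k ∈ Finset.range (N + 1),
          (MvPolynomial.C (y i)) ^ k * (MvPolynomial.X i) ^ (δ i - k) *
            (((δ i).choose k : ℕ) : MvPolynomial (Fin s) ℂ) := by
      refine Finset.sum_subset (Finset.range_subset_range.mpr (by have := hδ i; omega)) ?_
      intro k _ hk
      simp only [Finset.mem_range, not_lt] at hk
      have hc : (δ i).choose k = 0 := Nat.choose_eq_zero_of_lt (by omega)
      simp [hc]
    rw [add_comm (MvPolynomial.X i), add_pow, h1]
    refine Finset.sum_congr rfl fun k _ => ?_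
    rw [map_natCast (MvPolynomial.C : ℂ →+* MvPolynomial (Fin s) ℂ)]
  rw [Finset.prod_congr rfl (fun i _ => hfactor i), Finset.prod_univ_sum]
  rw [Finset.mul_sum]
  refine Finset.sum_congr rfl fun β hβ => ?_
  rw [DOp_monomial, MvPolynomial.smul_monomial, MvPolynomial.algebraMap_eq]
  simp only [Finsupp.coe_equivFunOnFinite_symm]
  have hexp : δ - Finsupp.equivFunOnFinite.symm β =
      Finsupp.equivFunOnFinite.symm (fun x => δ x - β x) := by
    ext i
    simp [Finsupp.tsub_apply]
  rw [Finset.prod_mul_distrib, Finset.prod_mul_distrib]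
  rw [Finset.prod_congr rfl (fun x _ => (map_pow (MvPolynomial.C : ℂ →+* MvPolynomial (Fin s) ℂ) (y x) (β x)).symm),
      ← map_prod, ← map_prod, Xprod, ← hexp]
  rw [show (MvPolynomial.C a : MvPolynomial (Fin s) ℂ) *
        (MvPolynomial.C (∏ x, (y x) ^ (β x)) * monomial (δ - Finsupp.equivFunOnFinite.symm β) 1 *
          MvPolynomial.C (∏ x, (((δ x).choose (β x) : ℕ) : ℂ))) =
      MvPolynomial.C (a * ((∏ x, (y x) ^ (β x)) * ∏ x, (((δ x).choose (β x) : ℕ) : ℂ))) *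
        monomial (δ - Finsupp.equivFunOnFinite.symm β) 1 by
    rw [map_mul, map_mul]
    ring]
  rw [MvPolynomial.C_mul_monomial]
  congr 1
  rw [mul_one]
  exact coeffid a y (fun x => δ x) β

lemma taylor {s : ℕ} (y : Fin s → ℂ) (N : ℕ) (p : MvPolynomial (Fin s) ℂ)
    (hp : p.totalDegree ≤ N) :
    MvPolynomial.aeval (fun i => MvPolynomial.X i + MvPolynomial.C (y i)) p =
      ∑ β ∈ Fintype.piFinset (fun _ : Fin s => Finset.range (N + 1)),
        (∏ j, y j ^ β j / ((β j).factorial : ℂ)) •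
          DOp (Finsupp.equivFunOnFinite.symm β) p := by
  conv_lhs => rw [← MvPolynomial.support_sum_monomial_coeff p]
  conv_rhs => rw [← MvPolynomial.support_sum_monomial_coeff p]
  rw [map_sum]
  trans ∑ δ ∈ p.support, ∑ β ∈ Fintype.piFinset (fun _ : Fin s => Finset.range (N + 1)),
      (∏ j, y j ^ β j / ((β j).factorial : ℂ)) •
        DOp (Finsupp.equivFunOnFinite.symm β) (monomial δ (MvPolynomial.coeff δ p))
  · refine Finset.sum_congr rfl fun δ hδ => taylor_monomial y N δ _ fun j => ?_
    have h1 : δ j ≤ ∑ i, δ i :=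
      Finset.single_le_sum (f := fun i => δ i) (fun _ _ => Nat.zero_le _) (Finset.mem_univ j)
    have h2 : (∑ i, δ i) = δ.sum fun _ e => e :=
      (Finsupp.sum_fintype δ (fun _ e => e) fun _ => rfl).symm
    exact le_trans h1 (le_trans (h2 ▸ MvPolynomial.le_totalDegree hδ) hp)
  · rw [Finset.sum_comm]
    refine Finset.sum_congr rfl fun β _ => ?_
    rw [← Finset.smul_sum]
    congr 1
    exact (map_sum (DOpL (Finsupp.equivFunOnFinite.symm β)) _ _).symm

lemma polyD_monomial_one {s : ℕ} (β : Fin s →₀ ℕ) (p : MvPolynomial (Fin s) ℂ) :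
    polyD (monomial β 1) p = DOp β p := by
  unfold polyD
  classical
  rw [MvPolynomial.support_monomial]
  simp

lemma shiftL_scaleOp {s : ℕ} (θ : Fin s → ℂ) (j : Fin s) (q : MvPolynomial (Fin s) ℂ) :
    shiftL j (scaleOp θ q) =
      scaleOp θ (MvPolynomial.aeval
        (fun i => MvPolynomial.X i + if i = j then MvPolynomial.C (θ j) else 0) q) := by
  show MvPolynomial.aeval _ (MvPolynomial.aeval _ q) = MvPolynomial.aeval _ (MvPolynomial.aeval _ q)
  rw [← AlgHom.comp_apply, ← AlgHom.comp_apply, MvPolynomial.comp_aeval, MvPolynomial.comp_aeval]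
  have hfn : (fun i => (MvPolynomial.aeval fun i' =>
        MvPolynomial.X i' + if i' = j then (1 : MvPolynomial (Fin s) ℂ) else 0)
          (MvPolynomial.C (θ i) * MvPolynomial.X i)) =
      (fun i => (MvPolynomial.aeval fun i' =>
        MvPolynomial.C (θ i') * MvPolynomial.X i')
          (MvPolynomial.X i + if i = j then MvPolynomial.C (θ j) else 0)) := by
    funext i
    rcases eq_or_ne i j with rfl | hij
    · simp [mul_add]
    · simp [hij]
  rw [hfn]

lemma delta1_scaleOp {s : ℕ} (θ : Fin s → ℂ) (j : Fin s) (q : MvPolynomial (Fin s) ℂ) :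
    delta1 j (scaleOp θ q) =
      scaleOp θ (MvPolynomial.aeval
        (fun i => MvPolynomial.X i + if i = j then MvPolynomial.C (θ j) else 0) q - q) := by
  unfold delta1
  rw [LinearMap.sub_apply, Module.End.one_apply, shiftL_scaleOp]
  unfold scaleOp
  rw [map_sub]

lemma shiftL_comm {s : ℕ} (i j : Fin s) : Commute (shiftL i) (shiftL j) := by
  unfold Commute SemiconjBy
  refine LinearMap.ext fun p => ?_
  show MvPolynomial.aeval _ (MvPolynomial.aeval _ p) = MvPolynomial.aeval _ (MvPolynomial.aeval _ p)
  rw [← AlgHom.comp_apply, ← AlgHom.comp_apply, MvPolynomial.comp_aeval, MvPolynomial.comp_aeval]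
  have hfn : (fun k => (MvPolynomial.aeval fun k' =>
        MvPolynomial.X k' + if k' = i then (1 : MvPolynomial (Fin s) ℂ) else 0)
          (MvPolynomial.X k + if k = j then (1 : MvPolynomial (Fin s) ℂ) else 0)) =
      (fun k => (MvPolynomial.aeval fun k' =>
        MvPolynomial.X k' + if k' = j then (1 : MvPolynomial (Fin s) ℂ) else 0)
          (MvPolynomial.X k + if k = i then (1 : MvPolynomial (Fin s) ℂ) else 0)) := by
    funext k
    by_cases hki : k = i <;> by_cases hkj : k = j <;> simp [hki, hkj] <;> ring
  rw [hfn]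

lemma delta1_comm {s : ℕ} (i j : Fin s) : Commute (delta1 i) (delta1 j) := by
  unfold delta1
  exact ((shiftL_comm i j).sub_right (Commute.one_right _)).sub_left
    (Commute.one_left _)

lemma ofFn_pow_prod_bump {M : Type*} [Monoid M] : ∀ {n : ℕ} (f : Fin n → M)
    (hf : ∀ i j, Commute (f i) (f j)) (γ : Fin n → ℕ) (j : Fin n),
    (List.ofFn fun i => f i ^ (γ i + if i = j then 1 else 0)).prod
      = (List.ofFn fun i => f i ^ γ i).prod * f j := by
  intro n
  induction n with
  | zero => intro f hf γ j; exact j.elim0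
  | succ n ih =>
    intro f hf γ j
    rw [List.ofFn_succ, List.ofFn_succ, List.prod_cons, List.prod_cons]
    cases j using Fin.cases with
    | zero =>
      have htail : (List.ofFn fun i : Fin n =>
          f i.succ ^ (γ i.succ + if i.succ = (0 : Fin (n+1)) then 1 else 0)) =
          List.ofFn fun i : Fin n => f i.succ ^ γ i.succ :=
        congrArg List.ofFn (funext fun i => by simp [Fin.succ_ne_zero])
      rw [htail]
      have hc : Commute (f 0) (List.ofFn fun i : Fin n => f i.succ ^ γ i.succ).prod := by
        refine Commute.list_prod_right _ _ fun x hx => ?_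
        obtain ⟨k, rfl⟩ := List.mem_ofFn.mp hx
        exact (hf 0 k.succ).pow_right _
      have h0 : (γ (0 : Fin (n+1)) + if (0 : Fin (n+1)) = 0 then 1 else 0) = γ 0 + 1 := by simp
      rw [h0, pow_succ, mul_assoc, hc.eq, ← mul_assoc]
    | succ j' =>
      have hhead : (if (0 : Fin (n+1)) = j'.succ then 1 else 0) = 0 := by
        simp [(Fin.succ_ne_zero j').symm]
      rw [hhead, add_zero]
      have htail : (List.ofFn fun i : Fin n =>
          f i.succ ^ (γ i.succ + if i.succ = j'.succ then 1 else 0)) =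
          List.ofFn fun i : Fin n =>
            (f ∘ Fin.succ) i ^ ((γ ∘ Fin.succ) i + if i = j' then 1 else 0) :=
        congrArg List.ofFn (funext fun i => by simp [Fin.succ_inj])
      rw [htail, ih (f ∘ Fin.succ) (fun a b => hf a.succ b.succ) (γ ∘ Fin.succ) j']
      simp [mul_assoc]

lemma deltaOp_bump {s : ℕ} (γ : Fin s → ℕ) (j : Fin s) :
    deltaOp (fun i => γ i + if i = j then 1 else 0) = deltaOp γ * delta1 j :=
  ofFn_pow_prod_bump delta1 delta1_comm γ j

lemma deltaOp_zero {s : ℕ} : deltaOp (fun _ : Fin s => 0) = 1 := by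
  unfold deltaOp
  refine List.prod_eq_one fun x hx => ?_
  obtain ⟨k, rfl⟩ := List.mem_ofFn.mp hx
  simp


lemma shiftL_deg0 {s : ℕ} (j : Fin s) (f : MvPolynomial (Fin s) ℂ)
    (h0 : f.totalDegree = 0) : shiftL j f = f := by
  have hm := (MvPolynomial.totalDegree_eq_zero_iff _ f).mp h0
  conv_lhs => rw [← MvPolynomial.support_sum_monomial_coeff f]
  conv_rhs => rw [← MvPolynomial.support_sum_monomial_coeff f]
  rw [map_sum]
  refine Finset.sum_congr rfl fun m hmem => ?_
  have hz : m = 0 := Finsupp.ext fun x => hm m hmem x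
  rw [hz]
  show MvPolynomial.aeval _ ((monomial 0) (MvPolynomial.coeff 0 f)) = _
  rw [MvPolynomial.monomial_zero', MvPolynomial.aeval_C, MvPolynomial.algebraMap_eq]

lemma delta1_monomial {s : ℕ} (j : Fin s) (δ : Fin s →₀ ℕ) (a : ℂ) :
    delta1 j (monomial δ a) =
      MvPolynomial.C a * ((MvPolynomial.X j + 1) ^ δ j - MvPolynomial.X j ^ δ j) *
        ∏ i ∈ Finset.univ.erase j, MvPolynomial.X i ^ δ i := by
  unfold delta1
  rw [LinearMap.sub_apply, Module.End.one_apply]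
  have hA : shiftL j ((monomial δ) a) =
      MvPolynomial.C a * ((MvPolynomial.X j + 1) ^ δ j *
        ∏ i ∈ Finset.univ.erase j, MvPolynomial.X i ^ δ i) := by
    show MvPolynomial.aeval _ ((monomial δ) a) = _
    rw [MvPolynomial.aeval_monomial, Finsupp.prod_fintype _ _ (by simp)]
    rw [← Finset.mul_prod_erase Finset.univ
      (fun i => (MvPolynomial.X i + if i = j then (1 : MvPolynomial (Fin s) ℂ) else 0) ^ δ i)
      (Finset.mem_univ j)]
    rw [MvPolynomial.algebraMap_eq]
    congr 1
    congr 1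
    · simp
    · refine Finset.prod_congr rfl fun i hi => ?_
      simp [Finset.ne_of_mem_erase hi]
  have hB : (monomial δ) a =
      MvPolynomial.C a * (MvPolynomial.X j ^ δ j *
        ∏ i ∈ Finset.univ.erase j, MvPolynomial.X i ^ δ i) := by
    rw [MvPolynomial.monomial_eq, Finsupp.prod_fintype _ _ (by simp)]
    rw [← Finset.mul_prod_erase Finset.univ
      (fun i => (MvPolynomial.X i : MvPolynomial (Fin s) ℂ) ^ δ i) (Finset.mem_univ j)]
  rw [hA, hB]
  ring

lemma delta1_monomial_deg {s : ℕ} (j : Fin s) (δ : Fin s →₀ ℕ) (a : ℂ) :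
    (delta1 j (monomial δ a)).totalDegree ≤ (∑ i, δ i) - 1 := by
  rcases Nat.eq_zero_or_pos (δ j) with hδj | hδj
  · rw [delta1_monomial, hδj]
    simp
  · set m := δ j - 1 with hm
    rw [delta1_monomial, show δ j = m + 1 by omega]
    have hS : ((MvPolynomial.X j + 1) ^ (m + 1) - MvPolynomial.X j ^ (m + 1)
        : MvPolynomial (Fin s) ℂ) =
        ∑ k ∈ Finset.range (m + 1),
          MvPolynomial.X j ^ k * (((m + 1).choose k : ℕ) : MvPolynomial (Fin s) ℂ) := by
      rw [add_pow, Finset.sum_range_succ]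
      simp only [one_pow, mul_one, Nat.choose_self, Nat.cast_one, Nat.sub_self, pow_zero]
      rw [add_sub_cancel_right]
    rw [hS]
    have h1 : (MvPolynomial.C a * (∑ k ∈ Finset.range (m + 1),
          MvPolynomial.X j ^ k * (((m + 1).choose k : ℕ) : MvPolynomial (Fin s) ℂ)) *
        ∏ i ∈ Finset.univ.erase j, MvPolynomial.X i ^ δ i).totalDegree ≤
        (0 + m) + ∑ i ∈ Finset.univ.erase j, δ i := by
      refine le_trans (MvPolynomial.totalDegree_mul _ _) (add_le_add ?_ ?_)
      · refine le_trans (MvPolynomial.totalDegree_mul _ _) (add_le_add ?_ ?_)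
        · exact le_of_eq (MvPolynomial.totalDegree_C a)
        · refine le_trans (MvPolynomial.totalDegree_finset_sum _ _) (Finset.sup_le fun k hk => ?_)
          refine le_trans (MvPolynomial.totalDegree_mul _ _) ?_
          rw [map_natCast (MvPolynomial.C : ℂ →+* MvPolynomial (Fin s) ℂ) ((m+1).choose k)
            |>.symm, MvPolynomial.totalDegree_C, MvPolynomial.totalDegree_X_pow]
          simp only [Finset.mem_range] at hk
          omega
      · refine le_trans (MvPolynomial.totalDegree_finset_prod _ _) ?_
        exact Finset.sum_le_sum fun i _ => le_of_eq (MvPolynomial.totalDegree_X_pow _ _)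
    refine le_trans h1 ?_
    have h2 : δ j + ∑ i ∈ Finset.univ.erase j, δ i = ∑ i, δ i :=
      Finset.add_sum_erase Finset.univ (fun i => δ i) (Finset.mem_univ j)
    omega

lemma delta1_deg {s : ℕ} (j : Fin s) (f : MvPolynomial (Fin s) ℂ) :
    delta1 j f = 0 ∨ (delta1 j f).totalDegree + 1 ≤ f.totalDegree := by
  rcases Nat.eq_zero_or_pos f.totalDegree with h0 | hpos
  · left
    unfold delta1
    rw [LinearMap.sub_apply, Module.End.one_apply, shiftL_deg0 j f h0, sub_self]
  · right
    have hrw : delta1 j f = ∑ δ ∈ f.support, delta1 j (monomial δ (MvPolynomial.coeff δ f)) := by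
      conv_lhs => rw [← MvPolynomial.support_sum_monomial_coeff f]
      rw [map_sum]
    rw [hrw]
    have hb : (∑ δ ∈ f.support, delta1 j (monomial δ (MvPolynomial.coeff δ f))).totalDegree ≤
        f.totalDegree - 1 := by
      refine le_trans (MvPolynomial.totalDegree_finset_sum _ _) (Finset.sup_le fun δ hδ => ?_)
      refine le_trans (delta1_monomial_deg j δ _) ?_
      have h2 : (∑ i, δ i) = δ.sum fun _ e => e :=
        (Finsupp.sum_fintype δ (fun _ e => e) fun _ => rfl).symm
      have h3 : (∑ i, δ i) ≤ f.totalDegree := h2 ▸ MvPolynomial.le_totalDegree hδ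
      omega
    omega

lemma deltaOp_deg {s : ℕ} : ∀ (n : ℕ) (γ : Fin s → ℕ), (∑ i, γ i) = n →
    ∀ f : MvPolynomial (Fin s) ℂ,
      deltaOp γ f = 0 ∨ (∑ i, γ i) + (deltaOp γ f).totalDegree ≤ f.totalDegree := by
  intro n
  induction n with
  | zero =>
    intro γ hγ f
    have hz : γ = fun _ => 0 := funext fun i =>
      Finset.sum_eq_zero_iff.mp hγ i (Finset.mem_univ i)
    rw [hz, deltaOp_zero]
    right
    simp [hγ, hz]
  | succ n ih =>
    intro γ hγ f
    have hne : ∃ j, γ j ≠ 0 := by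
      by_contra hcon
      push_neg at hcon
      simp [hcon] at hγ
    obtain ⟨j, hj⟩ := hne
    set γ' : Fin s → ℕ := fun i => γ i - if i = j then 1 else 0 with hγ'
    have hbump : γ = fun i => γ' i + if i = j then 1 else 0 := by
      funext i
      rcases eq_or_ne i j with rfl | hij
      · simp [hγ']
        omega
      · simp [hγ', hij]
    have hsum' : (∑ i, γ' i) = n := by
      have : (∑ i, γ i) = (∑ i, γ' i) + 1 := by
        conv_lhs => rw [hbump]
        rw [Finset.sum_add_distrib]
        congr 1
        simp
      omega
    have happ : deltaOp γ f = deltaOp γ' (delta1 j f) := by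
      conv_lhs => rw [hbump]
      rw [deltaOp_bump, Module.End.mul_apply]
    rcases delta1_deg j f with hzero | hdeg
    · left
      rw [happ, hzero, map_zero]
    · rcases ih γ' hsum' (delta1 j f) with hzero | hle
      · left
        rw [happ, hzero]
      · right
        rw [happ]
        have hsg : (∑ i, γ i) = (∑ i, γ' i) + 1 := by omega
        omega

lemma deltaOp_vanish {s : ℕ} (γ : Fin s → ℕ) (f : MvPolynomial (Fin s) ℂ)
    (h : f.totalDegree < ∑ i, γ i) : deltaOp γ f = 0 := by
  rcases deltaOp_deg (∑ i, γ i) γ rfl f with h0 | hle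
  · exact h0
  · omega

noncomputable def LAux {s : ℕ} (N : ℕ) (f : MvPolynomial (Fin s) ℂ) : MvPolynomial (Fin s) ℂ :=
  ∑ γ ∈ Fintype.piFinset fun _ : Fin s => Finset.range (N + 1),
    (MvPolynomial.eval (0 : Fin s → ℂ) (deltaOp γ f) / ∏ j, (Nat.factorial (γ j) : ℂ)) •
      ∏ j, (MvPolynomial.X j : MvPolynomial (Fin s) ℂ) ^ γ j

lemma LOp_eq_LAux {s : ℕ} (f : MvPolynomial (Fin s) ℂ) (N : ℕ) (h : f.totalDegree ≤ N) :
    LOp f = LAux N f := by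
  unfold LOp LAux
  have hvan : ∀ γ ∈ Fintype.piFinset fun _ : Fin s => Finset.range (N + 1),
      (MvPolynomial.eval (0 : Fin s → ℂ) (deltaOp γ f) / ∏ j, (Nat.factorial (γ j) : ℂ)) •
        (∏ j, (MvPolynomial.X j : MvPolynomial (Fin s) ℂ) ^ γ j) ≠ 0 →
        (∑ j, γ j ≤ f.totalDegree) := by
    intro γ _ hne
    by_contra hcon
    push_neg at hcon
    rw [deltaOp_vanish γ f hcon] at hne
    simp at hne
  rw [← Finset.sum_filter_of_ne hvan]
  refine Finset.sum_congr ?_ fun _ _ => rfl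
  ext γ
  simp only [Finset.mem_filter, Fintype.mem_piFinset, Finset.mem_range]
  constructor <;> rintro ⟨hbox, hP⟩ <;> refine ⟨fun a => ?_, hP⟩ <;>
    have h4 : γ a ≤ ∑ x, γ x :=
      Finset.single_le_sum (f := γ) (fun _ _ => Nat.zero_le _) (Finset.mem_univ a) <;>
    omega

lemma toF_sub_single {s : ℕ} (γ : Fin s → ℕ) (j : Fin s) :
    Finsupp.equivFunOnFinite.symm γ - Finsupp.single j 1 =
      Finsupp.equivFunOnFinite.symm (fun i => γ i - if i = j then 1 else 0) := by
  ext i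
  simp [Finsupp.tsub_apply, Finsupp.single_apply]
  rcases eq_or_ne i j with rfl | hij
  · simp
  · simp [hij, Ne.symm hij]

lemma pderiv_LAux {s : ℕ} (N : ℕ) (f : MvPolynomial (Fin s) ℂ) (h : f.totalDegree ≤ N)
    (j : Fin s) :
    MvPolynomial.pderiv j (LAux N f) = LAux N (delta1 j f) := by
  classical
  set c : (Fin s → ℕ) → ℂ := fun γ =>
    MvPolynomial.eval (0 : Fin s → ℂ) (deltaOp γ f) / ∏ i, (Nat.factorial (γ i) : ℂ) with hc
  set c' : (Fin s → ℕ) → ℂ := fun γ =>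
    MvPolynomial.eval (0 : Fin s → ℂ) (deltaOp γ (delta1 j f)) /
      ∏ i, (Nat.factorial (γ i) : ℂ) with hc'
  have hL : MvPolynomial.pderiv j (LAux N f) =
      ∑ γ ∈ Fintype.piFinset fun _ : Fin s => Finset.range (N + 1),
        monomial (Finsupp.equivFunOnFinite.symm γ - Finsupp.single j 1) (c γ * (γ j : ℂ)) := by
    unfold LAux
    rw [map_sum]
    refine Finset.sum_congr rfl fun γ _ => ?_
    rw [Xprod, Derivation.map_smul, MvPolynomial.pderiv_monomial,
      MvPolynomial.smul_monomial]
    congr 1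
    simp [hc]
  have hR : LAux N (delta1 j f) =
      ∑ γ ∈ Fintype.piFinset fun _ : Fin s => Finset.range (N + 1),
        monomial (Finsupp.equivFunOnFinite.symm γ) (c' γ) := by
    unfold LAux
    refine Finset.sum_congr rfl fun γ _ => ?_
    rw [Xprod, MvPolynomial.smul_monomial, smul_eq_mul, mul_one]
  rw [hL, hR]
  -- restrict left sum to γ with γ j ≠ 0
  have hLfilter : ∑ γ ∈ Fintype.piFinset fun _ : Fin s => Finset.range (N + 1),
      monomial (Finsupp.equivFunOnFinite.symm γ - Finsupp.single j 1) (c γ * (γ j : ℂ)) =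
      ∑ γ ∈ (Fintype.piFinset fun _ : Fin s => Finset.range (N + 1)).filter
          (fun γ => γ j ≠ 0),
        monomial (Finsupp.equivFunOnFinite.symm γ - Finsupp.single j 1) (c γ * (γ j : ℂ)) := by
    refine (Finset.sum_filter_of_ne fun γ _ hne hz => ?_).symm
    rw [hz] at hne
    simp at hne
  -- restrict right sum to B'
  have hRsub : ∑ γ ∈ Fintype.piFinset fun _ : Fin s => Finset.range (N + 1),
      monomial (Finsupp.equivFunOnFinite.symm γ) (c' γ) =
      ∑ γ ∈ Fintype.piFinset fun i : Fin s =>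
          Finset.range (if i = j then N else N + 1),
        monomial (Finsupp.equivFunOnFinite.symm γ) (c' γ) := by
    refine (Finset.sum_subset ?_ ?_).symm
    · intro γ hγ
      simp only [Fintype.mem_piFinset, Finset.mem_range] at *
      intro a
      have := hγ a
      split_ifs at this with haj
      · omega
      · exact this
    · intro γ hγ hnot
      simp only [Fintype.mem_piFinset, Finset.mem_range] at hγ hnot
      push_neg at hnot
      obtain ⟨a, ha⟩ := hnot
      have haj : a = j := by
        by_contra hne
        exact absurd (by simpa [hne] using hγ a) (by simpa [hne] using ha)
      subst haj
      have haN : γ a = N := by have := hγ a; simp at ha; omega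
      have hbig : f.totalDegree < ∑ i, (fun i => γ i + if i = a then 1 else 0) i := by
        have h1 : γ a + 1 ≤ ∑ i, (fun i => γ i + if i = a then 1 else 0) i := by
          refine le_trans ?_ (Finset.single_le_sum
            (f := fun i => γ i + if i = a then 1 else 0) (fun _ _ => Nat.zero_le _)
            (Finset.mem_univ a))
          simp
        omega
      have hz : deltaOp γ (delta1 a f) = 0 := by
        have : deltaOp (fun i => γ i + if i = a then 1 else 0) f = 0 := deltaOp_vanish _ f hbig
        rw [deltaOp_bump, Module.End.mul_apply] at this
        exact this
      rw [hc']
      simp [hz]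
  rw [hLfilter, hRsub]
  -- bijection
  refine Finset.sum_bij' (i := fun γ _ => fun i => γ i - if i = j then 1 else 0)
    (j := fun γ _ => fun i => γ i + if i = j then 1 else 0) ?_ ?_ ?_ ?_ ?_
  · intro γ hγ
    simp only [Finset.mem_filter, Fintype.mem_piFinset, Finset.mem_range] at hγ ⊢
    intro a
    have := hγ.1 a
    rcases eq_or_ne a j with rfl | haj
    · have := hγ.2
      simp
      omega
    · simp [haj]
      omega
  · intro γ hγ
    simp only [Finset.mem_filter, Fintype.mem_piFinset, Finset.mem_range] at hγ ⊢
    constructor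
    · intro a
      have := hγ a
      rcases eq_or_ne a j with rfl | haj
      · simp at this ⊢
        omega
      · simp [haj] at this ⊢
        exact this
    · simp
  · intro γ hγ
    simp only [Finset.mem_filter] at hγ
    funext i
    rcases eq_or_ne i j with rfl | hij
    · simp
      have : γ i ≠ 0 := hγ.2
      omega
    · simp [hij]
  · intro γ hγ
    funext i
    rcases eq_or_ne i j with rfl | hij
    · simp
    · simp [hij]
  · intro γ hγ
    simp only [Finset.mem_filter, Fintype.mem_piFinset, Finset.mem_range] at hγ
    have hγj : γ j ≠ 0 := hγ.2
    -- term equality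
    rw [toF_sub_single]
    congr 1
    -- coefficient identity
    have hbumpback : (fun i => (γ i - if i = j then 1 else 0) + if i = j then 1 else 0) = γ := by
      funext i
      rcases eq_or_ne i j with rfl | hij
      · simp
        omega
      · simp [hij]
    rw [hc, hc']
    simp only
    rw [show deltaOp (fun i => γ i - if i = j then 1 else 0) (delta1 j f) =
        deltaOp γ f by
      rw [← Module.End.mul_apply, ← deltaOp_bump, hbumpback]]
    -- now pure scalar arithmetic
    have hfacsplit : (∏ i, (Nat.factorial (γ i) : ℂ)) =
        (γ j : ℂ) * ∏ i, (Nat.factorial ((γ i - if i = j then 1 else 0)) : ℂ) := by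
      rw [← Finset.mul_prod_erase Finset.univ
          (fun i => (Nat.factorial (γ i) : ℂ)) (Finset.mem_univ j),
        ← Finset.mul_prod_erase Finset.univ
          (fun i => (Nat.factorial ((γ i - if i = j then 1 else 0)) : ℂ)) (Finset.mem_univ j)]
      have h1 : ∀ i ∈ Finset.univ.erase j,
          (Nat.factorial ((γ i - if i = j then 1 else 0)) : ℂ) = (Nat.factorial (γ i) : ℂ) := by
        intro i hi
        simp [Finset.ne_of_mem_erase hi]
      rw [Finset.prod_congr rfl h1]
      have h2 : Nat.factorial (γ j) = γ j * Nat.factorial (γ j - 1) := by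
        obtain ⟨m, hm⟩ := Nat.exists_eq_succ_of_ne_zero hγj
        rw [hm]
        simp [Nat.factorial_succ]
      rw [h2]
      push_cast
      simp
      ring
    rw [hfacsplit]
    have hne1 : (γ j : ℂ) ≠ 0 := Nat.cast_ne_zero.mpr hγj
    have hne2 : (∏ i, (Nat.factorial ((γ i - if i = j then 1 else 0)) : ℂ)) ≠ 0 :=
      Finset.prod_ne_zero_iff.mpr fun i _ => Nat.cast_ne_zero.mpr (Nat.factorial_ne_zero _)
    field_simp

lemma scaleOp_monomial {s : ℕ} (c : Fin s → ℂ) (δ : Fin s →₀ ℕ) (a : ℂ) :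
    scaleOp c (monomial δ a) = monomial δ (a * ∏ i, (c i) ^ δ i) := by
  unfold scaleOp
  rw [MvPolynomial.aeval_monomial, Finsupp.prod_fintype _ _ (by simp)]
  have h1 : ∀ i : Fin s, (MvPolynomial.C (c i) * MvPolynomial.X i) ^ δ i =
      MvPolynomial.C ((c i) ^ δ i) * MvPolynomial.X i ^ δ i := by
    intro i
    rw [mul_pow, map_pow]
  rw [Finset.prod_congr rfl fun i _ => h1 i, Finset.prod_mul_distrib, ← map_prod]
  have h2 : (∏ i, (MvPolynomial.X i : MvPolynomial (Fin s) ℂ) ^ δ i) = monomial δ 1 := by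
    rw [Xprod]
    congr 1
    rw [Finsupp.equivFunOnFinite_symm_coe]
  rw [h2, MvPolynomial.algebraMap_eq, ← mul_assoc, ← map_mul, MvPolynomial.C_mul_monomial,
    mul_one]

lemma scaleOp_add {s : ℕ} (c : Fin s → ℂ) (f g : MvPolynomial (Fin s) ℂ) :
    scaleOp c (f + g) = scaleOp c f + scaleOp c g := by
  unfold scaleOp
  rw [map_add]

lemma pderiv_scaleOp {s : ℕ} (c : Fin s → ℂ) (j : Fin s) (f : MvPolynomial (Fin s) ℂ) :
    MvPolynomial.pderiv j (scaleOp c f) = (c j) • scaleOp c (MvPolynomial.pderiv j f) := by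
  induction f using MvPolynomial.induction_on' with
  | monomial δ a =>
    rw [scaleOp_monomial, MvPolynomial.pderiv_monomial, MvPolynomial.pderiv_monomial,
      scaleOp_monomial, MvPolynomial.smul_monomial]
    congr 1
    rcases Nat.eq_zero_or_pos (δ j) with h0 | hpos
    · simp [h0]
    · have hsplit : (∏ i, (c i) ^ δ i) =
          c j * ∏ i, (c i) ^ (((δ - Finsupp.single j 1 : Fin s →₀ ℕ)) i) := by
        rw [← Finset.mul_prod_erase Finset.univ (fun i => (c i) ^ δ i) (Finset.mem_univ j),
          ← Finset.mul_prod_erase Finset.univ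
            (fun i => (c i) ^ (((δ - Finsupp.single j 1 : Fin s →₀ ℕ)) i)) (Finset.mem_univ j)]
        have h1 : ∀ i ∈ Finset.univ.erase j,
            (c i) ^ (((δ - Finsupp.single j 1 : Fin s →₀ ℕ)) i) = (c i) ^ δ i := by
          intro i hi
          simp [Finsupp.tsub_apply, Finsupp.single_apply, Ne.symm (Finset.ne_of_mem_erase hi)]
        rw [Finset.prod_congr rfl h1]
        have h2 : ((δ - Finsupp.single j 1 : Fin s →₀ ℕ)) j = δ j - 1 := by
          simp [Finsupp.tsub_apply]
        rw [h2]
        have h3 : (c j) ^ δ j = c j * (c j) ^ (δ j - 1) := by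
          conv_lhs => rw [show δ j = (δ j - 1) + 1 by omega]
          rw [pow_succ]
          ring
        rw [h3]
        ring
      rw [hsplit, smul_eq_mul]
      ring
  | add p q hp hq =>
    rw [scaleOp_add, map_add, map_add, hp, hq, scaleOp_add, smul_add]

/-- for `θ ∈ (ℂ∖{0})^s` and a finite-dimensional `D`-invariant `Q_θ`, the
space `P_θ = σ₋ L σ_θ Q_θ` is translation invariant. -/
theorem stmt7 {s : ℕ} (θ : Fin s → ℂ) (hθ : ∀ j, θ j ≠ 0)
    (Q : Submodule ℂ (MvPolynomial (Fin s) ℂ)) [FiniteDimensional ℂ Q]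
    (hQ : DInvariant Q) :
    ∀ p ∈ Pspace θ Q, ∀ y : Fin s → ℂ,
      MvPolynomial.aeval (fun j => MvPolynomial.X j + MvPolynomial.C (y j)) p
        ∈ Pspace θ Q := by
  intro p hp y
  have hgen : ∀ (j : Fin s) (x : MvPolynomial (Fin s) ℂ),
      x ∈ ((fun q => scaleOp (fun _ => -1) (LOp (scaleOp θ q))) ''
        (Q : Set (MvPolynomial (Fin s) ℂ))) →
      MvPolynomial.pderiv j x ∈ Pspace θ Q := by
    rintro j x ⟨q, hq, rfl⟩
    have hdd : (delta1 j (scaleOp θ q)).totalDegree ≤ (scaleOp θ q).totalDegree := by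
      rcases delta1_deg j (scaleOp θ q) with h0 | h1
      · rw [h0]
        simp
      · omega
    have h2 : MvPolynomial.pderiv j (LOp (scaleOp θ q)) = LOp (delta1 j (scaleOp θ q)) := by
      rw [LOp_eq_LAux (scaleOp θ q) (scaleOp θ q).totalDegree le_rfl,
        pderiv_LAux _ _ le_rfl j, ← LOp_eq_LAux _ _ hdd]
    have h3 : MvPolynomial.pderiv j (scaleOp (fun _ => -1) (LOp (scaleOp θ q))) =
        ((fun _ => (-1 : ℂ)) j) • scaleOp (fun _ => -1) (LOp (delta1 j (scaleOp θ q))) := by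
      rw [pderiv_scaleOp, h2]
    set q' := MvPolynomial.aeval
      (fun i => MvPolynomial.X i + if i = j then MvPolynomial.C (θ j) else 0) q - q with hq'def
    have hq' : q' ∈ Q := by
      have ht := taylor (fun i => if i = j then θ j else 0) q.totalDegree q le_rfl
      have hfn : (fun i => MvPolynomial.X i +
          MvPolynomial.C (if i = j then θ j else 0)) =
          fun i => MvPolynomial.X i +
            if i = j then MvPolynomial.C (θ j) else (0 : MvPolynomial (Fin s) ℂ) := by
        funext i
        split_ifs <;> simp
      rw [hfn] at ht
      refine Submodule.sub_mem Q ?_ hq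
      rw [ht]
      refine Submodule.sum_mem _ fun β _ => Submodule.smul_mem _ _ ?_
      rw [← polyD_monomial_one]
      exact hQ _ q hq
    have h4 : delta1 j (scaleOp θ q) = scaleOp θ q' := delta1_scaleOp θ j q
    rw [h3, h4]
    exact Submodule.smul_mem _ _ (Submodule.subset_span ⟨q', hq', rfl⟩)
  have hclosed : ∀ (j : Fin s), ∀ r ∈ Pspace θ Q, MvPolynomial.pderiv j r ∈ Pspace θ Q := by
    intro j r hr
    refine Submodule.span_induction (p := fun x _ => MvPolynomial.pderiv j x ∈ Pspace θ Q)
      (fun x hx => hgen j x hx)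
      (by show MvPolynomial.pderiv j (0 : MvPolynomial (Fin s) ℂ) ∈ Pspace θ Q
          rw [map_zero]; exact Submodule.zero_mem _) ?_ ?_ hr
    · intro x z hx hz h1 h2
      show MvPolynomial.pderiv j (x + z) ∈ Pspace θ Q
      rw [map_add]
      exact Submodule.add_mem _ h1 h2
    · intro a x hx h1
      show MvPolynomial.pderiv j (a • x) ∈ Pspace θ Q
      rw [Derivation.map_smul]
      exact Submodule.smul_mem _ _ h1
  rw [taylor y p.totalDegree p le_rfl]
  exact Submodule.sum_mem _ fun β _ => Submodule.smul_mem _ _ (DOp_mem _ hclosed _ p hp)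
end
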